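/- arXiv:0706.1011 — 4 statements merged into one kernel-verified Lean document; each statement's English description precedes it below -/
import Mathlib

section
/- Let φ be the operator of left wedge multiplication by a fixed even-degree form ω on the complexified exterior algebra of an oriented odd-dimensional real inner product space, and let φ^⋆ be its super-adjoint with respect to the induced Hermitean inner product. Then φ^⋆ = * ∘ φ ∘ *, where * is the Hodge star. -/
set_option linter.unusedSectionVars false

open ExteriorAlgebra

/-- Basis monomial of the complexified exterior algebra. -/
noncomputable def cMonomial {n : ℕ} {V : Type*} [AddCommGroup V] [Module ℂ V]
    (b : Module.Basis (Fin n) ℂ V) (s : Finset (Fin n)) : ExteriorAlgebra ℂ V :=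
  ((s.sort (· ≤ ·)).map fun i => ι ℂ (b i)).prod

namespace Stmt7

variable {n : ℕ} {V : Type*} [AddCommGroup V] [Module ℂ V] (b : Module.Basis (Fin n) ℂ V)

noncomputable def fL (L : List (Fin n)) : ExteriorAlgebra ℂ V :=
  (L.map fun i => ι ℂ (b i)).prod

lemma fL_nil : fL b ([] : List (Fin n)) = 1 := rfl

lemma fL_cons (a : Fin n) (L : List (Fin n)) : fL b (a :: L) = ι ℂ (b a) * fL b L := by
  simp [fL]

lemma fL_append (L L' : List (Fin n)) : fL b (L ++ L') = fL b L * fL b L' := by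
  simp [fL]

lemma cMonomial_eq_fL (s : Finset (Fin n)) : cMonomial b s = fL b (s.sort (· ≤ ·)) := rfl

lemma anti (x y : V) : ι ℂ x * ι ℂ y = -(ι ℂ y * ι ℂ x) :=
  eq_neg_of_add_eq_zero_left (ι_add_mul_swap x y)

lemma swapS (L : List (Fin n)) (v : V) :
    ι ℂ v * fL b L = (-1 : ℂ) ^ L.length • (fL b L * ι ℂ v) := by
  induction L with
  | nil => simp [fL]
  | cons x L ih =>
    rw [fL_cons, ← mul_assoc, anti v (b x), neg_mul, mul_assoc, ih, mul_smul_comm]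
    rw [List.length_cons, pow_succ, mul_smul, ← mul_assoc, ← smul_neg, neg_one_smul]

lemma gcomm (L L' : List (Fin n)) :
    fL b L * fL b L' = (-1:ℂ) ^ (L.length * L'.length) • (fL b L' * fL b L) := by
  induction L with
  | nil => simp [fL]
  | cons x L ih =>
    rw [fL_cons, mul_assoc, ih, mul_smul_comm, ← mul_assoc, swapS b L' (b x),
      smul_mul_assoc, smul_smul, mul_assoc, ← fL_cons, List.length_cons, ← pow_add]
    ring_nf

lemma iota_mul_eq_zero {a : Fin n} {L : List (Fin n)} (h : a ∈ L) :
    ι ℂ (b a) * fL b L = 0 := by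
  induction L with
  | nil => simp at h
  | cons x L ih =>
    rw [fL_cons, ← mul_assoc]
    rcases List.mem_cons.mp h with h | h
    · subst h; rw [ι_sq_zero, zero_mul]
    · rw [anti (b a) (b x), neg_mul, mul_assoc, ih h, mul_zero, neg_zero]

lemma fL_eq_zero {L : List (Fin n)} (h : ¬ L.Nodup) : fL b L = 0 := by
  induction L with
  | nil => simp at h
  | cons x L ih =>
    rw [fL_cons]
    rw [List.nodup_cons] at h
    push_neg at h
    by_cases hx : x ∈ L
    · exact iota_mul_eq_zero b hx
    · rw [ih (h hx), mul_zero]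

lemma fL_perm {L L' : List (Fin n)} (h : L.Perm L') :
    ∃ z : ℂ, (z = 1 ∨ z = -1) ∧ fL b L = z • fL b L' := by
  induction h with
  | nil => exact ⟨1, Or.inl rfl, by simp⟩
  | cons x _ ih =>
    obtain ⟨z, hz, he⟩ := ih
    exact ⟨z, hz, by rw [fL_cons, he, mul_smul_comm, fL_cons]⟩
  | swap x y L =>
    refine ⟨-1, Or.inr rfl, ?_⟩
    rw [fL_cons, fL_cons, fL_cons, fL_cons, ← mul_assoc, ← mul_assoc, anti (b y) (b x)]
    simp
  | trans h1 h2 ih1 ih2 =>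
    obtain ⟨z1, hz1, e1⟩ := ih1
    obtain ⟨z2, hz2, e2⟩ := ih2
    exact ⟨z1 * z2, by rcases hz1 with rfl | rfl <;> rcases hz2 with rfl | rfl <;> norm_num,
      by rw [e1, e2, smul_smul]⟩

-- chunk 2
lemma mono_mul_mono_disjoint {s t : Finset (Fin n)} (h : Disjoint s t) :
    ∃ z : ℂ, (z = 1 ∨ z = -1) ∧ cMonomial b s * cMonomial b t = z • cMonomial b (s ∪ t) := by
  have hp : (s.sort (· ≤ ·) ++ t.sort (· ≤ ·)).Perm ((s ∪ t).sort (· ≤ ·)) := by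
    rw [← Multiset.coe_eq_coe]
    show ((s.sort (· ≤ ·) : List (Fin n)) : Multiset (Fin n)) + (t.sort (· ≤ ·) : List (Fin n))
        = ((s ∪ t).sort (· ≤ ·) : List (Fin n))
    rw [Finset.sort_eq, Finset.sort_eq, Finset.sort_eq, ← Finset.disjUnion_eq_union s t h,
      show (s.disjUnion t h).val = s.val + t.val from rfl]
  obtain ⟨z, hz, he⟩ := fL_perm b hp
  exact ⟨z, hz, by
    rw [cMonomial_eq_fL, cMonomial_eq_fL, ← fL_append, he, ← cMonomial_eq_fL]⟩

lemma mono_mul_mono_zero {s t : Finset (Fin n)} (h : ¬ Disjoint s t) :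
    cMonomial b s * cMonomial b t = 0 := by
  rw [cMonomial_eq_fL, cMonomial_eq_fL, ← fL_append]
  refine fL_eq_zero b ?_
  rw [List.nodup_append]
  rintro ⟨-, -, hd⟩
  obtain ⟨a, ha, ha'⟩ := Finset.not_disjoint_iff.mp h
  exact hd a ((Finset.mem_sort _).mpr ha) a ((Finset.mem_sort _).mpr ha') rfl

lemma mono_comm (s t : Finset (Fin n)) :
    cMonomial b s * cMonomial b t
      = (-1:ℂ) ^ (s.card * t.card) • (cMonomial b t * cMonomial b s) := by
  rw [cMonomial_eq_fL, cMonomial_eq_fL, gcomm, Finset.length_sort, Finset.length_sort]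

lemma fL_mem_pow (L : List (Fin n)) :
    fL b L ∈ (LinearMap.range (ι ℂ : V →ₗ[ℂ] ExteriorAlgebra ℂ V)) ^ L.length := by
  induction L with
  | nil =>
    simp only [List.length_nil, pow_zero]
    exact Submodule.mem_one.mpr ⟨1, map_one _⟩
  | cons x L ih =>
    rw [fL_cons, List.length_cons, pow_succ']
    exact Submodule.mul_mem_mul ⟨b x, rfl⟩ ih

lemma mono_mem_pow (s : Finset (Fin n)) :
    cMonomial b s ∈ (LinearMap.range (ι ℂ : V →ₗ[ℂ] ExteriorAlgebra ℂ V)) ^ s.card := by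
  have := fL_mem_pow b (s.sort (· ≤ ·))
  rwa [Finset.length_sort, ← cMonomial_eq_fL] at this

lemma fL_mem_span (L : List (Fin n)) :
    fL b L ∈ Submodule.span ℂ (cMonomial b '' {u : Finset (Fin n) | u.card = L.length}) := by
  by_cases h : L.Nodup
  · have hp : L.Perm (L.toFinset.sort (· ≤ ·)) := by
      rw [← Multiset.coe_eq_coe, Finset.sort_eq]
      show (↑L : Multiset (Fin n)) = L.toFinset.val
      rw [show L.toFinset = Multiset.toFinset (↑L : Multiset (Fin n)) from rfl,
        Multiset.toFinset_val, Multiset.dedup_eq_self.mpr (Multiset.coe_nodup.mpr h)]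
    obtain ⟨z, hz, he⟩ := fL_perm b hp
    rw [he]
    exact Submodule.smul_mem _ _ (Submodule.subset_span
      ⟨L.toFinset, List.toFinset_card_of_nodup h, (cMonomial_eq_fL b _).symm⟩)
  · rw [fL_eq_zero b h]; exact zero_mem _

lemma iota_basis_mul_mem_span (i : Fin n) {k : ℕ} {s : Finset (Fin n)} (hs : s.card = k) :
    ι ℂ (b i) * cMonomial b s
      ∈ Submodule.span ℂ (cMonomial b '' {u : Finset (Fin n) | u.card = k + 1}) := by
  have h1 : ι ℂ (b i) * cMonomial b s = fL b (i :: s.sort (· ≤ ·)) := by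
    rw [fL_cons, cMonomial_eq_fL]
  rw [h1]
  have := fL_mem_span b (i :: s.sort (· ≤ ·))
  simpa [Finset.length_sort, hs] using this

lemma iota_mul_mem_span (v : V) {k : ℕ} {x : ExteriorAlgebra ℂ V}
    (hx : x ∈ Submodule.span ℂ (cMonomial b '' {u : Finset (Fin n) | u.card = k})) :
    ι ℂ v * x ∈ Submodule.span ℂ (cMonomial b '' {u : Finset (Fin n) | u.card = k + 1}) := by
  induction hx using Submodule.span_induction with
  | mem y hy =>
    obtain ⟨s, hs, rfl⟩ := hy
    have hv : (ι ℂ v : ExteriorAlgebra ℂ V) = ∑ j, b.repr v j • ι ℂ (b j) := by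
      conv_lhs => rw [← b.sum_repr v, map_sum]
      simp
    rw [hv, Finset.sum_mul]
    exact Submodule.sum_mem _ fun j _ => by
      rw [smul_mul_assoc]
      exact Submodule.smul_mem _ _ (iota_basis_mul_mem_span b j hs)
  | zero => simp
  | add y z _ _ hy hz => rw [mul_add]; exact add_mem hy hz
  | smul c y _ hy => rw [mul_smul_comm]; exact Submodule.smul_mem _ _ hy

lemma pow_subset_span {k : ℕ} {x : ExteriorAlgebra ℂ V}
    (hx : x ∈ (LinearMap.range (ι ℂ : V →ₗ[ℂ] ExteriorAlgebra ℂ V)) ^ k) :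
    x ∈ Submodule.span ℂ (cMonomial b '' {u : Finset (Fin n) | u.card = k}) := by
  induction hx using Submodule.pow_induction_on_left' with
  | algebraMap r =>
    have h1 : (cMonomial b (∅ : Finset (Fin n))) = 1 := by
      rw [cMonomial_eq_fL, Finset.sort_empty]; rfl
    have h2 : algebraMap ℂ (ExteriorAlgebra ℂ V) r = r • cMonomial b ∅ := by
      rw [h1, Algebra.algebraMap_eq_smul_one]
    rw [h2]
    exact Submodule.smul_mem _ _ (Submodule.subset_span ⟨∅, by simp, rfl⟩)
  | add x y i hx hy ihx ihy => exact add_mem ihx ihy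
  | mem_mul m hm i x hx ih =>
    obtain ⟨v, rfl⟩ := hm
    exact iota_mul_mem_span b v ih

lemma all_mem_span (x : ExteriorAlgebra ℂ V) :
    x ∈ Submodule.span ℂ (Set.range (cMonomial b)) := by
  induction x using ExteriorAlgebra.induction with
  | algebraMap r =>
    have h1 : (cMonomial b (∅ : Finset (Fin n))) = 1 := by
      rw [cMonomial_eq_fL, Finset.sort_empty]; rfl
    rw [show algebraMap ℂ (ExteriorAlgebra ℂ V) r = r • cMonomial b ∅ by
      rw [h1, Algebra.algebraMap_eq_smul_one]]
    exact Submodule.smul_mem _ _ (Submodule.subset_span ⟨∅, rfl⟩)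
  | ι v =>
    have hv : (ι ℂ v : ExteriorAlgebra ℂ V) = ∑ j, b.repr v j • ι ℂ (b j) := by
      conv_lhs => rw [← b.sum_repr v, map_sum]
      simp
    rw [hv]
    refine Submodule.sum_mem _ fun j _ => Submodule.smul_mem _ _ (Submodule.subset_span ⟨{j}, ?_⟩)
    rw [cMonomial_eq_fL, Finset.sort_singleton]
    simp [fL]
  | mul x y hx hy =>
    induction hx using Submodule.span_induction with
    | mem x' hx' =>
      induction hy using Submodule.span_induction with
      | mem y' hy' =>
        obtain ⟨s, rfl⟩ := hx'
        obtain ⟨t, rfl⟩ := hy'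
        rw [cMonomial_eq_fL, cMonomial_eq_fL, ← fL_append]
        exact Submodule.span_mono (Set.image_subset_range _ _) (fL_mem_span b _)
      | zero => rw [mul_zero]; exact zero_mem _
      | add y1 y2 _ _ h1 h2 => rw [mul_add]; exact add_mem h1 h2
      | smul c y1 _ h1 => rw [mul_smul_comm]; exact Submodule.smul_mem _ _ h1
    | zero => rw [zero_mul]; exact zero_mem _
    | add x1 x2 _ _ h1 h2 => rw [add_mul]; exact add_mem h1 h2
    | smul c x1 _ h1 => rw [smul_mul_assoc]; exact Submodule.smul_mem _ _ h1
  | add x y hx hy => exact add_mem hx hy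

section Inn
variable (inn : ExteriorAlgebra ℂ V → ExteriorAlgebra ℂ V → ℂ)
    (inn_addl : ∀ x y z, inn (x + y) z = inn x z + inn y z)
    (inn_addr : ∀ x y z, inn x (y + z) = inn x y + inn x z)
    (inn_sml : ∀ (c : ℂ) (x y), inn (c • x) y = c * inn x y)
    (inn_smr : ∀ (c : ℂ) (x y), inn x (c • y) = (starRingEnd ℂ) c * inn x y)
    (inn_mon : ∀ s t, inn (cMonomial b s) (cMonomial b t) = if s = t then 1 else 0)

include inn_addr in
lemma inn_zero_r (x : ExteriorAlgebra ℂ V) : inn x 0 = 0 := by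
  have := inn_addr x 0 0
  rw [add_zero] at this
  exact right_eq_add.mp this

include inn_addl in
lemma inn_zero_l (x : ExteriorAlgebra ℂ V) : inn 0 x = 0 := by
  have := inn_addl 0 0 x
  rw [add_zero] at this
  exact right_eq_add.mp this

include inn_addl inn_addr inn_sml inn_smr inn_mon

lemma expand (x : ExteriorAlgebra ℂ V) :
    x = ∑ s : Finset (Fin n), (starRingEnd ℂ) (inn (cMonomial b s) x) • cMonomial b s := by
  induction all_mem_span b x using Submodule.span_induction with
  | mem y hy =>
    obtain ⟨t, rfl⟩ := hy
    simp only [inn_mon, apply_ite (starRingEnd ℂ), map_one, map_zero, ite_smul, one_smul,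
      zero_smul, Finset.sum_ite_eq', Finset.mem_univ, if_pos]
  | zero =>
    simp only [inn_zero_r inn inn_addr, map_zero, zero_smul, Finset.sum_const_zero]
  | add x y _ _ ihx ihy =>
    conv_lhs => rw [ihx, ihy]
    rw [← Finset.sum_add_distrib]
    exact Finset.sum_congr rfl fun s _ => by rw [inn_addr, map_add, add_smul]
  | smul c y _ ihy =>
    conv_lhs => rw [ihy]
    rw [Finset.smul_sum]
    exact Finset.sum_congr rfl fun s _ => by
      rw [inn_smr, map_mul, RingHomInvPair.comp_apply_eq, smul_smul]

lemma inn_ext {x y : ExteriorAlgebra ℂ V}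
    (h : ∀ s, inn (cMonomial b s) x = inn (cMonomial b s) y) : x = y := by
  calc x = ∑ s : Finset (Fin n), (starRingEnd ℂ) (inn (cMonomial b s) x) • cMonomial b s :=
        expand b inn inn_addl inn_addr inn_sml inn_smr inn_mon x
    _ = ∑ s : Finset (Fin n), (starRingEnd ℂ) (inn (cMonomial b s) y) • cMonomial b s :=
        Finset.sum_congr rfl fun s _ => by rw [h s]
    _ = y := (expand b inn inn_addl inn_addr inn_sml inn_smr inn_mon y).symm

lemma inn_eq_zero_of_card_ne {k : ℕ} {x : ExteriorAlgebra ℂ V}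
    (hx : x ∈ Submodule.span ℂ (cMonomial b '' {u : Finset (Fin n) | u.card = k}))
    {s : Finset (Fin n)} (hs : s.card ≠ k) : inn (cMonomial b s) x = 0 := by
  induction hx using Submodule.span_induction with
  | mem y hy =>
    obtain ⟨t, ht, rfl⟩ := hy
    rw [inn_mon, if_neg]
    rintro rfl
    exact hs ht
  | zero => exact inn_zero_r inn inn_addr _
  | add y z _ _ ihy ihz => rw [inn_addr, ihy, ihz, add_zero]
  | smul c y _ ihy => rw [inn_smr, ihy, mul_zero]

lemma inn_real {x : ExteriorAlgebra ℂ V}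
    (hx : x ∈ Submodule.span ℝ (Set.range (cMonomial b))) (s : Finset (Fin n)) :
    (starRingEnd ℂ) (inn (cMonomial b s) x) = inn (cMonomial b s) x := by
  induction hx using Submodule.span_induction with
  | mem y hy =>
    obtain ⟨t, rfl⟩ := hy
    rw [inn_mon]
    split <;> simp
  | zero => rw [inn_zero_r inn inn_addr, map_zero]
  | add x y _ _ h1 h2 => rw [inn_addr, map_add, h1, h2]
  | smul c y _ h1 =>
    rw [← Complex.coe_smul c y]
    rw [inn_smr, map_mul, h1]
    norm_num [Complex.conj_ofReal]

lemma top_ne_zero : cMonomial b Finset.univ ≠ 0 := by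
  intro h
  have h1 := inn_mon (Finset.univ : Finset (Fin n)) Finset.univ
  rw [if_pos rfl, h, inn_zero_r inn inn_addr] at h1
  exact one_ne_zero h1.symm

omit inn_addl inn_addr inn_sml inn_smr inn_mon in
lemma smul_cancel {a c : ℂ} {m : ExteriorAlgebra ℂ V} (hm : m ≠ 0) (h : a • m = c • m) :
    a = c := by
  by_contra hne
  apply hm
  have h2 : (a - c) • m = 0 := by rw [sub_smul, h, sub_self]
  rcases smul_eq_zero.mp h2 with h3 | h3
  · exact absurd (sub_eq_zero.mp h3) hne
  · exact h3

variable (st : ExteriorAlgebra ℂ V →ₗ[ℂ] ExteriorAlgebra ℂ V)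
    (st_deg : ∀ s : Finset (Fin n),
      st (cMonomial b s) ∈
        (LinearMap.range (ι ℂ : V →ₗ[ℂ] ExteriorAlgebra ℂ V)) ^ (n - s.card))
    (st_char : ∀ s t : Finset (Fin n), s.card = t.card →
      cMonomial b s * st (cMonomial b t)
        = (if s = t then (1 : ℂ) else 0) • cMonomial b Finset.univ)

include st_deg st_char in
lemma st_mono (t : Finset (Fin n)) {e : ℂ} (he : e = 1 ∨ e = -1)
    (het : cMonomial b t * cMonomial b tᶜ = e • cMonomial b Finset.univ) :
    st (cMonomial b t) = e • cMonomial b tᶜ := by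
  have hcard_t : t.card ≤ n := by simpa using Finset.card_le_univ t
  have hUx := expand b inn inn_addl inn_addr inn_sml inn_smr inn_mon (st (cMonomial b t))
  have hκ : ∀ s : Finset (Fin n),
      (starRingEnd ℂ) (inn (cMonomial b s) (st (cMonomial b t))) = if s = tᶜ then e else 0 := by
    intro s
    by_cases hcs : s.card = n - t.card
    · have hs'card : sᶜ.card = t.card := by
        rw [Finset.card_compl, Fintype.card_fin, hcs]
        omega
      have hchar := st_char sᶜ t hs'card
      have hmul : cMonomial b sᶜ * st (cMonomial b t)
          = (starRingEnd ℂ) (inn (cMonomial b s) (st (cMonomial b t)))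
            • (cMonomial b sᶜ * cMonomial b s) := by
        conv_lhs => rw [hUx]
        rw [Finset.mul_sum, Finset.sum_eq_single s]
        · rw [mul_smul_comm]
        · intro u _ hu
          by_cases hcu : u.card = n - t.card
          · have hnd : ¬ Disjoint sᶜ u := by
              intro hd
              apply hu
              have hsub : u ⊆ s := fun a ha => by
                by_contra hns
                exact (Finset.disjoint_left.mp hd (Finset.mem_compl.mpr hns)) ha
              exact Finset.eq_of_subset_of_card_le hsub (by omega)
            rw [mul_smul_comm, mono_mul_mono_zero b hnd, smul_zero]
          · rw [inn_eq_zero_of_card_ne b inn inn_addl inn_addr inn_sml inn_smr inn_mon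
              (pow_subset_span b (st_deg t)) hcu, map_zero, zero_smul, mul_zero]
        · intro hs
          exact absurd (Finset.mem_univ s) hs
      obtain ⟨z, hz, hzs⟩ := mono_mul_mono_disjoint b (disjoint_compl_left : Disjoint sᶜ s)
      rw [show sᶜ ∪ s = (Finset.univ : Finset (Fin n)) from by
        rw [Finset.union_comm]; exact Finset.union_compl s] at hzs
      rw [hzs, smul_smul] at hmul
      rw [hmul] at hchar
      have hkey : (starRingEnd ℂ) (inn (cMonomial b s) (st (cMonomial b t))) * z
          = if sᶜ = t then 1 else 0 :=
        smul_cancel (top_ne_zero b inn inn_addl inn_addr inn_sml inn_smr inn_mon) hchar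
      by_cases hst : s = tᶜ
      · subst hst
        rw [compl_compl, if_pos rfl] at hkey
        rw [compl_compl] at hzs
        rw [het] at hzs
        have hez : e = z :=
          smul_cancel (top_ne_zero b inn inn_addl inn_addr inn_sml inn_smr inn_mon) hzs
        rw [if_pos rfl]
        rcases he with rfl | rfl
        · rw [← hez, mul_one] at hkey
          exact hkey
        · rw [← hez, mul_neg_one] at hkey
          linear_combination -hkey
      · have hsc : sᶜ ≠ t := fun h => hst (by rw [← h, compl_compl])
        rw [if_neg hsc] at hkey
        rw [if_neg hst]
        rcases hz with rfl | rfl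
        · rw [mul_one] at hkey
          exact hkey
        · rw [mul_neg_one] at hkey
          linear_combination -hkey
    · rw [if_neg, inn_eq_zero_of_card_ne b inn inn_addl inn_addr inn_sml inn_smr inn_mon
        (pow_subset_span b (st_deg t)) hcs, map_zero]
      rintro rfl
      exact hcs (by rw [Finset.card_compl, Fintype.card_fin])
  rw [hUx]
  calc ∑ s : Finset (Fin n),
        (starRingEnd ℂ) (inn (cMonomial b s) (st (cMonomial b t))) • cMonomial b s
      = ∑ s : Finset (Fin n), (if s = tᶜ then e else 0) • cMonomial b s :=
        Finset.sum_congr rfl fun s _ => by rw [hκ s]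
    _ = e • cMonomial b tᶜ := by
        simp only [ite_smul, zero_smul, Finset.sum_ite_eq', Finset.mem_univ, if_pos]



include st_deg st_char in
lemma key (hn : Odd n) (u s t : Finset (Fin n)) (hu : Even u.card) :
    inn (cMonomial b u * cMonomial b s) (cMonomial b t)
      = inn (cMonomial b s) (st (cMonomial b u * st (cMonomial b t))) := by
  obtain ⟨et, hetpm, het⟩ := mono_mul_mono_disjoint b (disjoint_compl_right : Disjoint t tᶜ)
  rw [Finset.union_compl] at het
  have hstt : st (cMonomial b t) = et • cMonomial b tᶜ :=
    st_mono b inn inn_addl inn_addr inn_sml inn_smr inn_mon st st_deg st_char t hetpm het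
  by_cases hd1 : Disjoint u tᶜ
  · obtain ⟨z1, hz1pm, hz1⟩ := mono_mul_mono_disjoint b hd1
    obtain ⟨e2, he2pm, he2⟩ :=
      mono_mul_mono_disjoint b (disjoint_compl_right : Disjoint (u ∪ tᶜ) (u ∪ tᶜ)ᶜ)
    rw [Finset.union_compl] at he2
    have hst2 : st (cMonomial b (u ∪ tᶜ)) = e2 • cMonomial b (u ∪ tᶜ)ᶜ :=
      st_mono b inn inn_addl inn_addr inn_sml inn_smr inn_mon st st_deg st_char _ he2pm he2
    have hRHS : st (cMonomial b u * st (cMonomial b t))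
        = (et * (z1 * e2)) • cMonomial b (u ∪ tᶜ)ᶜ := by
      rw [hstt, mul_smul_comm, map_smul, hz1, map_smul, hst2, smul_smul, smul_smul,
        mul_assoc]
    by_cases hs : s = (u ∪ tᶜ)ᶜ
    · subst hs
      have hd2 : Disjoint u (u ∪ tᶜ)ᶜ :=
        Disjoint.mono_left Finset.subset_union_left disjoint_compl_right
      have hsubt : ∀ a ∈ u, a ∈ t := by
        intro a ha
        have := Finset.disjoint_left.mp hd1 ha
        simpa using this
      have hut : u ∪ (u ∪ tᶜ)ᶜ = t := by
        ext a
        simp only [Finset.mem_union, Finset.mem_compl, not_or, not_not]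
        constructor
        · rintro (h | ⟨h1, h2⟩)
          · exact hsubt a h
          · exact h2
        · intro hat
          by_cases hau : a ∈ u
          · exact Or.inl hau
          · exact Or.inr ⟨hau, hat⟩
      obtain ⟨z3, hz3pm, hz3⟩ := mono_mul_mono_disjoint b hd2
      rw [hut] at hz3
      rw [hz3, inn_sml, inn_mon, if_pos rfl, mul_one, hRHS, inn_smr, inn_mon, if_pos rfl,
        mul_one]
      have hpm : et * (z1 * e2) = 1 ∨ et * (z1 * e2) = -1 := by
        rcases hetpm with rfl | rfl <;> rcases hz1pm with rfl | rfl <;>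
          rcases he2pm with rfl | rfl <;> norm_num
      rw [show (starRingEnd ℂ) (et * (z1 * e2)) = et * (z1 * e2) from by
        rcases hpm with h | h <;> rw [h] <;> simp]
      obtain ⟨es, hespm, hes⟩ :=
        mono_mul_mono_disjoint b (disjoint_compl_right : Disjoint (u ∪ tᶜ)ᶜ ((u ∪ tᶜ)ᶜ)ᶜ)
      rw [Finset.union_compl, compl_compl] at hes
      have hA1 : cMonomial b (u ∪ tᶜ)ᶜ * (cMonomial b u * cMonomial b tᶜ)
          = (z1 * es) • cMonomial b Finset.univ := by
        rw [hz1, mul_smul_comm, hes, smul_smul]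
      have hcomm : cMonomial b (u ∪ tᶜ)ᶜ * cMonomial b u
          = cMonomial b u * cMonomial b (u ∪ tᶜ)ᶜ := by
        rw [mono_comm b (u ∪ tᶜ)ᶜ u, Even.neg_one_pow (hu.mul_left _), one_smul]
      have hA2 : cMonomial b (u ∪ tᶜ)ᶜ * (cMonomial b u * cMonomial b tᶜ)
          = (z3 * et) • cMonomial b Finset.univ := by
        rw [← mul_assoc, hcomm, hz3, smul_mul_assoc, het, smul_smul]
      have h1 : z1 * es = z3 * et :=
        smul_cancel (top_ne_zero b inn inn_addl inn_addr inn_sml inn_smr inn_mon)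
          (hA1.symm.trans hA2)
      have hev : Even ((u ∪ tᶜ).card * (u ∪ tᶜ)ᶜ.card) := by
        rcases Nat.even_or_odd (u ∪ tᶜ).card with h | h
        · exact h.mul_right _
        · refine Even.mul_left ?_ _
          rw [Finset.card_compl, Fintype.card_fin]
          exact Nat.Odd.sub_odd hn h
      have hcomm2 : cMonomial b (u ∪ tᶜ) * cMonomial b (u ∪ tᶜ)ᶜ
          = cMonomial b (u ∪ tᶜ)ᶜ * cMonomial b (u ∪ tᶜ) := by
        rw [mono_comm b (u ∪ tᶜ) (u ∪ tᶜ)ᶜ, Even.neg_one_pow hev, one_smul]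
      have h2 : e2 = es :=
        smul_cancel (top_ne_zero b inn inn_addl inn_addr inn_sml inn_smr inn_mon)
          (by rw [← he2, hcomm2, hes])
      have het2 : et * et = 1 := by rcases hetpm with rfl | rfl <;> norm_num
      calc z3 = z3 * (et * et) := by rw [het2, mul_one]
        _ = z1 * es * et := by rw [← mul_assoc, ← h1]
        _ = et * (z1 * e2) := by rw [h2]; ring
    · rw [hRHS, inn_smr, inn_mon, if_neg hs, mul_zero]
      by_cases hd2 : Disjoint u s
      · have hne : ¬ (u ∪ s = t) := by
          intro heq
          apply hs
          ext a
          simp only [Finset.mem_compl, Finset.mem_union, not_or, not_not]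
          constructor
          · intro ha
            refine ⟨Finset.disjoint_right.mp hd2 ha, ?_⟩
            rw [← heq]
            exact Finset.mem_union_right u ha
          · rintro ⟨hau, hat⟩
            have hm : a ∈ u ∪ s := by rw [heq]; exact hat
            rcases Finset.mem_union.mp hm with h | h
            · exact absurd h hau
            · exact h
        obtain ⟨z3, hz3pm, hz3⟩ := mono_mul_mono_disjoint b hd2
        rw [hz3, inn_sml, inn_mon, if_neg hne, mul_zero]
      · rw [mono_mul_mono_zero b hd2, inn_zero_l inn inn_addl]
  · rw [hstt, mul_smul_comm, mono_mul_mono_zero b hd1, smul_zero, map_zero,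
      inn_zero_r inn inn_addr]
    by_cases hd2 : Disjoint u s
    · have hne : ¬ (u ∪ s = t) := by
        intro heq
        apply hd1
        refine Finset.disjoint_left.mpr fun a hau hac => ?_
        exact (Finset.mem_compl.mp hac) (heq ▸ Finset.mem_union_left s hau)
      obtain ⟨z3, hz3pm, hz3⟩ := mono_mul_mono_disjoint b hd2
      rw [hz3, inn_sml, inn_mon, if_neg hne, mul_zero]
    · rw [mono_mul_mono_zero b hd2, inn_zero_l inn inn_addl]

include inn_addl inn_addr inn_sml inn_smr inn_mon in
lemma real_decomp {k : ℕ} {x : ExteriorAlgebra ℂ V}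
    (hr : x ∈ Submodule.span ℝ (Set.range (cMonomial b)))
    (hk : x ∈ Submodule.span ℂ (cMonomial b '' {u : Finset (Fin n) | u.card = k})) :
    x ∈ Submodule.span ℝ (cMonomial b '' {u : Finset (Fin n) | u.card = k}) := by
  rw [expand b inn inn_addl inn_addr inn_sml inn_smr inn_mon x]
  refine Submodule.sum_mem _ fun s _ => ?_
  by_cases hcs : s.card = k
  · have hre := inn_real b inn inn_addl inn_addr inn_sml inn_smr inn_mon hr s
    have hre2 : ((inn (cMonomial b s) x).re : ℂ) = inn (cMonomial b s) x :=
      Complex.conj_eq_iff_re.mp hre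
    rw [hre, ← hre2, Complex.coe_smul]
    exact Submodule.smul_mem _ _ (Submodule.subset_span ⟨s, hcs, rfl⟩)
  · rw [inn_eq_zero_of_card_ne b inn inn_addl inn_addr inn_sml inn_smr inn_mon hk hcs,
      map_zero, zero_smul]
    exact zero_mem _

end Inn
end Stmt7

/-- let `φ = ω ∧ ·` be left wedge multiplication by a fixed real form `ω` of
even degree `2d` on the complexified exterior algebra of an oriented odd-dimensional real
inner product space, and let `ψ = φ^⋆` be its super-adjoint with respect to the induced
Hermitean inner product `inn`, i.e. `(φ α, β) = (-1)^(deg φ · deg α) (α, ψ β)` for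
homogeneous `α`. Then `φ^⋆ = * ∘ φ ∘ *`, where `*` is the Hodge star `st`. -/
theorem stmt7 {n : ℕ} (hn : Odd n) {V : Type*} [AddCommGroup V] [Module ℂ V]
    (b : Module.Basis (Fin n) ℂ V)
    (inn : ExteriorAlgebra ℂ V → ExteriorAlgebra ℂ V → ℂ)
    (inn_addl : ∀ x y z, inn (x + y) z = inn x z + inn y z)
    (inn_addr : ∀ x y z, inn x (y + z) = inn x y + inn x z)
    (inn_sml : ∀ (c : ℂ) (x y), inn (c • x) y = c * inn x y)
    (inn_smr : ∀ (c : ℂ) (x y), inn x (c • y) = (starRingEnd ℂ) c * inn x y)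
    (inn_mon : ∀ s t, inn (cMonomial b s) (cMonomial b t) = if s = t then 1 else 0)
    (st : ExteriorAlgebra ℂ V →ₗ[ℂ] ExteriorAlgebra ℂ V)
    (st_deg : ∀ s : Finset (Fin n),
      st (cMonomial b s) ∈
        (LinearMap.range (ι ℂ : V →ₗ[ℂ] ExteriorAlgebra ℂ V)) ^ (n - s.card))
    (st_char : ∀ s t : Finset (Fin n), s.card = t.card →
      cMonomial b s * st (cMonomial b t)
        = (if s = t then (1 : ℂ) else 0) • cMonomial b Finset.univ)
    (d : ℕ) (ω : ExteriorAlgebra ℂ V)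
    (hω_even : ω ∈ (LinearMap.range (ι ℂ : V →ₗ[ℂ] ExteriorAlgebra ℂ V)) ^ (2 * d))
    (hω_real : ω ∈ Submodule.span ℝ (Set.range (cMonomial b)))
    (ψ : ExteriorAlgebra ℂ V →ₗ[ℂ] ExteriorAlgebra ℂ V)
    (hψ : ∀ (k : ℕ) (α : ExteriorAlgebra ℂ V),
      α ∈ (LinearMap.range (ι ℂ : V →ₗ[ℂ] ExteriorAlgebra ℂ V)) ^ k →
      ∀ β, inn (ω * α) β = (-1 : ℂ) ^ (2 * d * k) * inn α (ψ β)) :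
    ∀ β, ψ β = st (ω * st β) := by
  have hω' : ω ∈ Submodule.span ℝ (cMonomial b '' {u : Finset (Fin n) | u.card = 2 * d}) :=
    Stmt7.real_decomp b inn inn_addl inn_addr inn_sml inn_smr inn_mon hω_real
      (Stmt7.pow_subset_span b hω_even)
  have key2 : ∀ χ, χ ∈ Submodule.span ℝ (cMonomial b '' {u : Finset (Fin n) | u.card = 2 * d}) →
      ∀ s t : Finset (Fin n), inn (χ * cMonomial b s) (cMonomial b t)
        = inn (cMonomial b s) (st (χ * st (cMonomial b t))) := by
    intro χ hχ
    induction hχ using Submodule.span_induction with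
    | mem y hy =>
      obtain ⟨u, hu, rfl⟩ := hy
      intro s t
      exact Stmt7.key b inn inn_addl inn_addr inn_sml inn_smr inn_mon st st_deg st_char hn
        u s t ⟨d, by rw [hu]; ring⟩
    | zero =>
      intro s t
      rw [zero_mul, Stmt7.inn_zero_l inn inn_addl, zero_mul, map_zero,
        Stmt7.inn_zero_r inn inn_addr]
    | add x y _ _ ihx ihy =>
      intro s t
      rw [add_mul, inn_addl, ihx, ihy, add_mul, map_add, inn_addr]
    | smul c x _ ihx =>
      intro s t
      rw [← Complex.coe_smul, smul_mul_assoc, inn_sml, ihx, smul_mul_assoc, map_smul,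
        inn_smr, Complex.conj_ofReal]
  have key3 : ∀ s : Finset (Fin n), ∀ γ, γ ∈ Submodule.span ℂ (Set.range (cMonomial b)) →
      inn (ω * cMonomial b s) γ = inn (cMonomial b s) (st (ω * st γ)) := by
    intro s γ hγ
    induction hγ using Submodule.span_induction with
    | mem y hy =>
      obtain ⟨t, rfl⟩ := hy
      exact key2 ω hω' s t
    | zero =>
      rw [Stmt7.inn_zero_r inn inn_addr, map_zero, mul_zero, map_zero,
        Stmt7.inn_zero_r inn inn_addr]
    | add x y _ _ ihx ihy =>
      rw [inn_addr, ihx, ihy, map_add, mul_add, map_add, inn_addr]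
    | smul c x _ ihx =>
      rw [inn_smr, ihx, map_smul, mul_smul_comm, map_smul, inn_smr]
  intro β
  refine Stmt7.inn_ext b inn inn_addl inn_addr inn_sml inn_smr inn_mon fun s => ?_
  have h1 := hψ s.card (cMonomial b s) (Stmt7.mono_mem_pow b s) β
  have hsgn : ((-1 : ℂ)) ^ (2 * d * s.card) = 1 := by
    rw [mul_assoc, pow_mul, neg_one_sq, one_pow]
  rw [hsgn, one_mul] at h1
  rw [← h1]
  exact key3 s β (Stmt7.all_mem_span b β)
end

section
/- Let V be the operator of left wedge multiplication by a fixed odd-degree real form on the complexified exterior algebra of an oriented odd-dimensional real inner product space, and let A = V^⋆ be its super-adjoint. Then A = * ∘ V ∘ * where * is the Hodge star, and the operators iV and A both preserve the odd pairing ⟨α,β⟩·Ω = α ∧ conj(β) in the super sense: ⟨φ(α),β⟩ + (-1)^{deg(α)deg(φ)}⟨α,φ(β)⟩ = 0. -/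
open ExteriorAlgebra

namespace Stmt8Aux


def IsSign (c : ℂ) : Prop := c = 1 ∨ c = -1

lemma IsSign.one : IsSign 1 := Or.inl rfl

lemma IsSign.mul {c d : ℂ} (hc : IsSign c) (hd : IsSign d) : IsSign (c * d) := by
  rcases hc with h | h <;> rcases hd with h' | h' <;> simp [IsSign, h, h']

lemma IsSign.mul_self {c : ℂ} (hc : IsSign c) : c * c = 1 := by
  rcases hc with h | h <;> simp [h]

lemma IsSign.conj {c : ℂ} (hc : IsSign c) : (starRingEnd ℂ) c = c := by
  rcases hc with h | h <;> simp [h]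

lemma IsSign.ne_zero {c : ℂ} (hc : IsSign c) : c ≠ 0 := by
  rcases hc with h | h <;> simp [h]

lemma IsSign.neg_one_pow (k : ℕ) : IsSign ((-1 : ℂ) ^ k) := by
  rcases Nat.even_or_odd k with h | h
  · exact Or.inl h.neg_one_pow
  · exact Or.inr h.neg_one_pow

lemma negOnePow_congr {a c : ℕ} (h : a % 2 = c % 2) : ((-1 : ℂ)) ^ a = (-1) ^ c := by
  conv_lhs => rw [← Nat.div_add_mod a 2]
  conv_rhs => rw [← Nat.div_add_mod c 2]
  rw [h, pow_add, pow_add, pow_mul, pow_mul, neg_one_sq, one_pow, one_pow]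

variable {n : ℕ} {V : Type*} [AddCommGroup V] [Module ℂ V] (b : Module.Basis (Fin n) ℂ V)

noncomputable def mList (l : List (Fin n)) : ExteriorAlgebra ℂ V :=
  (l.map fun i => ι ℂ (b i)).prod

lemma mList_nil : mList b [] = 1 := rfl

lemma mList_cons (a : Fin n) (l : List (Fin n)) :
    mList b (a :: l) = ι ℂ (b a) * mList b l := by
  simp [mList]

lemma mList_append (l₁ l₂ : List (Fin n)) :
    mList b (l₁ ++ l₂) = mList b l₁ * mList b l₂ := by
  simp [mList]

lemma mList_perm {l₁ l₂ : List (Fin n)} (h : l₁.Perm l₂) :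
    ∃ c : ℂ, IsSign c ∧ mList b l₁ = c • mList b l₂ := by
  induction h with
  | nil => exact ⟨1, IsSign.one, by simp⟩
  | cons a h ih =>
    obtain ⟨c, hc, e⟩ := ih
    exact ⟨c, hc, by rw [mList_cons, mList_cons, e, mul_smul_comm]⟩
  | swap x y l =>
    refine ⟨-1, Or.inr rfl, ?_⟩
    rw [mList_cons, mList_cons, mList_cons, mList_cons, ← mul_assoc, ← mul_assoc]
    have h := ExteriorAlgebra.ι_add_mul_swap (R := ℂ) (b x) (b y)
    have : ι ℂ (b y) * ι ℂ (b x) = -(ι ℂ (b x) * ι ℂ (b y)) := eq_neg_of_add_eq_zero_right h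
    rw [this]
    simp
  | trans h₁ h₂ ih₁ ih₂ =>
    obtain ⟨c, hc, e⟩ := ih₁
    obtain ⟨c', hc', e'⟩ := ih₂
    exact ⟨c * c', hc.mul hc', by rw [e, e', smul_smul]⟩

lemma mList_eq_zero_of_not_nodup {l : List (Fin n)} (h : ¬ l.Nodup) :
    mList b l = 0 := by
  rw [List.nodup_iff_count_le_one] at h
  push_neg at h
  obtain ⟨x, hx⟩ := h
  have hx1 : x ∈ l := by
    rw [← List.count_pos_iff (l := l)]; omega
  have h2 : x ∈ l.erase x := by
    rw [← List.count_pos_iff, List.count_erase_self]; omega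
  have p1 : l.Perm (x :: l.erase x) := List.perm_cons_erase hx1
  have p2 : (l.erase x).Perm (x :: (l.erase x).erase x) := List.perm_cons_erase h2
  have p : l.Perm (x :: x :: (l.erase x).erase x) := p1.trans (p2.cons x)
  obtain ⟨c, hc, e⟩ := mList_perm b p
  rw [e, mList_cons, mList_cons, ← mul_assoc, ι_sq_zero, zero_mul, smul_zero]



-- placeholders from part1
lemma cMonomial_def (s : Finset (Fin n)) : cMonomial b s = mList b (s.sort (· ≤ ·)) := rfl

lemma cMonomial_empty : cMonomial b ∅ = 1 := by simp [cMonomial]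

lemma cMonomial_singleton (i : Fin n) : cMonomial b {i} = ι ℂ (b i) := by simp [cMonomial]

lemma sort_append_perm {s t : Finset (Fin n)} (h : Disjoint s t) :
    ((s.sort (· ≤ ·)) ++ (t.sort (· ≤ ·))).Perm ((s ∪ t).sort (· ≤ ·)) := by
  rw [← Multiset.coe_eq_coe]
  have : ((((s.sort (· ≤ ·)) ++ (t.sort (· ≤ ·))) : List (Fin n)) : Multiset (Fin n))
      = (s.sort (· ≤ ·) : List (Fin n)) + (t.sort (· ≤ ·) : List (Fin n)) := rfl
  rw [this, Finset.sort_eq, Finset.sort_eq, Finset.sort_eq, ← Finset.disjUnion_eq_union s t h]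
  rfl

lemma mon_mul_mon_of_not_disjoint {s t : Finset (Fin n)} (h : ¬ Disjoint s t) :
    cMonomial b s * cMonomial b t = 0 := by
  rw [cMonomial_def, cMonomial_def, ← mList_append]
  apply mList_eq_zero_of_not_nodup
  rw [List.nodup_append]
  push_neg
  intro _ _
  obtain ⟨i, his, hit⟩ := Finset.not_disjoint_iff.mp h
  exact ⟨i, (Finset.mem_sort _).mpr his, i, (Finset.mem_sort _).mpr hit, rfl⟩

lemma mon_mul_mon {s t : Finset (Fin n)} (h : Disjoint s t) :
    ∃ c : ℂ, IsSign c ∧ cMonomial b s * cMonomial b t = c • cMonomial b (s ∪ t) := by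
  rw [cMonomial_def, cMonomial_def, ← mList_append, cMonomial_def]
  exact mList_perm b (sort_append_perm h)

lemma iota_mList_comm (l : List (Fin n)) (v : V) :
    ι ℂ v * mList b l = ((-1 : ℂ) ^ l.length) • (mList b l * ι ℂ v) := by
  induction l with
  | nil => simp [mList]
  | cons a l ih =>
    rw [mList_cons, ← mul_assoc]
    have h : ι ℂ v * ι ℂ (b a) = -(ι ℂ (b a) * ι ℂ v) :=
      eq_neg_of_add_eq_zero_right (ExteriorAlgebra.ι_add_mul_swap (b a) v)
    rw [h, neg_mul, mul_assoc, ih, mul_smul_comm, List.length_cons,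
      pow_succ, mul_neg_one, neg_smul, mul_assoc]

lemma mList_comm (l₁ l₂ : List (Fin n)) :
    mList b l₁ * mList b l₂ = ((-1 : ℂ) ^ (l₁.length * l₂.length)) • (mList b l₂ * mList b l₁) := by
  induction l₁ with
  | nil => simp [mList]
  | cons a l ih =>
    rw [mList_cons, mul_assoc, ih, mul_smul_comm, ← mul_assoc, iota_mList_comm, smul_mul_assoc,
      smul_smul, List.length_cons, ← pow_add, mul_assoc]
    congr 2
    ring

lemma mon_comm (s t : Finset (Fin n)) :
    cMonomial b s * cMonomial b t
      = ((-1 : ℂ) ^ (s.card * t.card)) • (cMonomial b t * cMonomial b s) := by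
  rw [cMonomial_def, cMonomial_def, mList_comm, Finset.length_sort, Finset.length_sort]

lemma mList_mem_pow (l : List (Fin n)) :
    mList b l ∈ (LinearMap.range (ι ℂ : V →ₗ[ℂ] ExteriorAlgebra ℂ V)) ^ l.length := by
  induction l with
  | nil =>
    rw [List.length_nil, pow_zero]
    exact Submodule.mem_one.mpr ⟨1, map_one _⟩
  | cons a l ih =>
    rw [mList_cons, List.length_cons, pow_succ']
    exact Submodule.mul_mem_mul (LinearMap.mem_range_self _ _) ih

lemma mon_mem_pow (s : Finset (Fin n)) :
    cMonomial b s ∈ (LinearMap.range (ι ℂ : V →ₗ[ℂ] ExteriorAlgebra ℂ V)) ^ s.card := by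
  rw [cMonomial_def, ← Finset.length_sort (α := Fin n) (· ≤ ·) (s := s)]
  exact mList_mem_pow b _



/-- span of monomials of cardinality `k` -/
noncomputable def Sk (k : ℕ) : Submodule ℂ (ExteriorAlgebra ℂ V) :=
  Submodule.span ℂ (cMonomial b '' {s : Finset (Fin n) | s.card = k})

lemma mon_mem_Sk {s : Finset (Fin n)} {k : ℕ} (h : s.card = k) :
    cMonomial b s ∈ Sk b k :=
  Submodule.subset_span ⟨s, h, rfl⟩

lemma iota_mul_Sk (i : Fin n) (k : ℕ) {y : ExteriorAlgebra ℂ V} (hy : y ∈ Sk b k) :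
    ι ℂ (b i) * y ∈ Sk b (k + 1) := by
  induction hy using Submodule.span_induction with
  | mem x hx =>
    obtain ⟨s, hs, rfl⟩ := hx
    rw [← cMonomial_singleton b i]
    by_cases hd : Disjoint {i} s
    · obtain ⟨c, _, hc⟩ := mon_mul_mon b hd
      rw [hc]
      refine Submodule.smul_mem _ _ (mon_mem_Sk b ?_)
      rw [Finset.card_union_of_disjoint hd, Finset.card_singleton, hs, add_comm]
    · rw [mon_mul_mon_of_not_disjoint b hd]; exact Submodule.zero_mem _
  | zero => rw [mul_zero]; exact Submodule.zero_mem _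
  | add x y _ _ hx hy => rw [mul_add]; exact Submodule.add_mem _ hx hy
  | smul c x _ hx => rw [mul_smul_comm]; exact Submodule.smul_mem _ _ hx

lemma iotaV_mul_Sk (v : V) (k : ℕ) {y : ExteriorAlgebra ℂ V} (hy : y ∈ Sk b k) :
    ι ℂ v * y ∈ Sk b (k + 1) := by
  have hv : v = ∑ i : Fin n, b.repr v i • b i := (b.sum_repr v).symm
  rw [hv, map_sum, Finset.sum_mul]
  refine Submodule.sum_mem _ fun i _ => ?_
  rw [map_smul, smul_mul_assoc]
  exact Submodule.smul_mem _ _ (iota_mul_Sk b i k hy)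

lemma pow_eq_Sk (k : ℕ) :
    (LinearMap.range (ι ℂ : V →ₗ[ℂ] ExteriorAlgebra ℂ V)) ^ k = Sk b k := by
  apply le_antisymm
  · intro x hx
    induction hx using Submodule.pow_induction_on_left' with
    | algebraMap r =>
      have : (algebraMap ℂ (ExteriorAlgebra ℂ V)) r = r • cMonomial b ∅ := by
        rw [cMonomial_empty, Algebra.algebraMap_eq_smul_one]
      rw [this]
      exact Submodule.smul_mem _ _ (mon_mem_Sk b Finset.card_empty)
    | add x y i hx hy ihx ihy => exact Submodule.add_mem _ ihx ihy
    | mem_mul m hm i x hx ih =>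
      obtain ⟨v, rfl⟩ := hm
      exact iotaV_mul_Sk b v i ih
  · rw [Sk, Submodule.span_le]
    rintro _ ⟨s, hs, rfl⟩
    rw [← hs]
    exact mon_mem_pow b s

lemma span_mon_top : Submodule.span ℂ (Set.range (cMonomial b)) = ⊤ := by
  set S := Submodule.span ℂ (Set.range (cMonomial b)) with hS
  have hmul : ∀ x y : ExteriorAlgebra ℂ V, x ∈ S → y ∈ S → x * y ∈ S := by
    intro x y hx hy
    induction hx using Submodule.span_induction with
    | mem x hx =>
      obtain ⟨s, rfl⟩ := hx
      induction hy using Submodule.span_induction with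
      | mem y hy =>
        obtain ⟨t, rfl⟩ := hy
        by_cases hd : Disjoint s t
        · obtain ⟨c, _, hc⟩ := mon_mul_mon b hd
          rw [hc]
          exact Submodule.smul_mem _ _ (Submodule.subset_span ⟨s ∪ t, rfl⟩)
        · rw [mon_mul_mon_of_not_disjoint b hd]; exact Submodule.zero_mem _
      | zero => rw [mul_zero]; exact Submodule.zero_mem _
      | add y z _ _ h1 h2 => rw [mul_add]; exact Submodule.add_mem _ h1 h2
      | smul c y _ h1 => rw [mul_smul_comm]; exact Submodule.smul_mem _ _ h1
    | zero => rw [zero_mul]; exact Submodule.zero_mem _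
    | add x z _ _ h1 h2 => rw [add_mul]; exact Submodule.add_mem _ h1 h2
    | smul c x _ h1 => rw [smul_mul_assoc]; exact Submodule.smul_mem _ _ h1
  suffices h : ∀ x : ExteriorAlgebra ℂ V, x ∈ S by
    rw [eq_top_iff]; intro x _; exact h x
  intro x
  induction x using ExteriorAlgebra.induction with
  | algebraMap r =>
    have : (algebraMap ℂ (ExteriorAlgebra ℂ V)) r = r • cMonomial b ∅ := by
      rw [cMonomial_empty, Algebra.algebraMap_eq_smul_one]
    rw [this]
    exact Submodule.smul_mem _ _ (Submodule.subset_span ⟨∅, rfl⟩)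
  | ι v =>
    have hv : v = ∑ i : Fin n, b.repr v i • b i := (b.sum_repr v).symm
    rw [hv, map_sum]
    refine Submodule.sum_mem _ fun i _ => ?_
    rw [map_smul]
    refine Submodule.smul_mem _ _ ?_
    rw [← cMonomial_singleton b i]
    exact Submodule.subset_span ⟨{i}, rfl⟩
  | mul x y hx hy => exact hmul x y hx hy
  | add x y hx hy => exact Submodule.add_mem _ hx hy

/-- real span of monomials -/
noncomputable def Sr : Submodule ℝ (ExteriorAlgebra ℂ V) :=
  Submodule.span ℝ (Set.range (cMonomial b))

lemma Sr_smul_sign {c : ℂ} (hc : IsSign c) {x : ExteriorAlgebra ℂ V} (hx : x ∈ Sr b) :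
    c • x ∈ Sr b := by
  rcases hc with h | h
  · rw [h, one_smul]; exact hx
  · rw [h, neg_smul, one_smul]; exact Submodule.neg_mem _ hx

lemma Sr_mul {x y : ExteriorAlgebra ℂ V} (hx : x ∈ Sr b) (hy : y ∈ Sr b) : x * y ∈ Sr b := by
  induction hx using Submodule.span_induction with
  | mem x hx =>
    obtain ⟨s, rfl⟩ := hx
    induction hy using Submodule.span_induction with
    | mem y hy =>
      obtain ⟨t, rfl⟩ := hy
      by_cases hd : Disjoint s t
      · obtain ⟨c, hc, hmul⟩ := mon_mul_mon b hd
        rw [hmul]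
        exact Sr_smul_sign b hc (Submodule.subset_span ⟨s ∪ t, rfl⟩)
      · rw [mon_mul_mon_of_not_disjoint b hd]; exact Submodule.zero_mem _
    | zero => rw [mul_zero]; exact Submodule.zero_mem _
    | add y z _ _ h1 h2 => rw [mul_add]; exact Submodule.add_mem _ h1 h2
    | smul c y _ h1 => rw [mul_smul_comm]; exact Submodule.smul_mem _ _ h1
  | zero => rw [zero_mul]; exact Submodule.zero_mem _
  | add x z _ _ h1 h2 => rw [add_mul]; exact Submodule.add_mem _ h1 h2
  | smul c x _ h1 => rw [smul_mul_assoc]; exact Submodule.smul_mem _ _ h1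


end Stmt8Aux

set_option maxHeartbeats 2000000 in
open Stmt8Aux in
/-- let `Vop = ω ∧ ·` be left wedge multiplication by a fixed real form `ω` of
odd degree `2d+1` on the complexified exterior algebra of an oriented odd-dimensional real
inner product space, and `A = Vop^⋆` its super-adjoint with respect to the induced Hermitean
inner product `inn`. Then `A = * ∘ Vop ∘ *` where `*` is the Hodge star `st`, and the odd
operators `i·Vop` and `A` both preserve the odd pairing `⟨α,β⟩ = (α ∧ conj β, Ω)` in the
super sense: `⟨φ α, β⟩ + (-1)^(deg α · deg φ) ⟨α, φ β⟩ = 0`. -/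
theorem stmt8 {n : ℕ} (hn : Odd n) {V : Type*} [AddCommGroup V] [Module ℂ V]
    (b : Module.Basis (Fin n) ℂ V)
    (inn : ExteriorAlgebra ℂ V → ExteriorAlgebra ℂ V → ℂ)
    (inn_addl : ∀ x y z, inn (x + y) z = inn x z + inn y z)
    (inn_addr : ∀ x y z, inn x (y + z) = inn x y + inn x z)
    (inn_sml : ∀ (c : ℂ) (x y), inn (c • x) y = c * inn x y)
    (inn_smr : ∀ (c : ℂ) (x y), inn x (c • y) = (starRingEnd ℂ) c * inn x y)
    (inn_mon : ∀ s t, inn (cMonomial b s) (cMonomial b t) = if s = t then 1 else 0)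
    (cj : ExteriorAlgebra ℂ V →ₛₗ[starRingEnd ℂ] ExteriorAlgebra ℂ V)
    (cj_mon : ∀ s, cj (cMonomial b s) = cMonomial b s)
    (cj_mul : ∀ x y, cj (x * y) = cj x * cj y)
    (st : ExteriorAlgebra ℂ V →ₗ[ℂ] ExteriorAlgebra ℂ V)
    (st_deg : ∀ s : Finset (Fin n),
      st (cMonomial b s) ∈
        (LinearMap.range (ι ℂ : V →ₗ[ℂ] ExteriorAlgebra ℂ V)) ^ (n - s.card))
    (st_char : ∀ s t : Finset (Fin n), s.card = t.card →
      cMonomial b s * st (cMonomial b t)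
        = (if s = t then (1 : ℂ) else 0) • cMonomial b Finset.univ)
    (d : ℕ) (ω : ExteriorAlgebra ℂ V)
    (hω_odd : ω ∈ (LinearMap.range (ι ℂ : V →ₗ[ℂ] ExteriorAlgebra ℂ V)) ^ (2 * d + 1))
    (hω_real : ω ∈ Submodule.span ℝ (Set.range (cMonomial b)))
    (A : ExteriorAlgebra ℂ V →ₗ[ℂ] ExteriorAlgebra ℂ V)
    (hA : ∀ (k : ℕ) (α : ExteriorAlgebra ℂ V),
      α ∈ (LinearMap.range (ι ℂ : V →ₗ[ℂ] ExteriorAlgebra ℂ V)) ^ k →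
      ∀ β, inn (ω * α) β = (-1 : ℂ) ^ ((2 * d + 1) * k) * inn α (A β)) :
    (∀ β, A β = st (ω * st β)) ∧
    (∀ (k : ℕ) (α : ExteriorAlgebra ℂ V),
      α ∈ (LinearMap.range (ι ℂ : V →ₗ[ℂ] ExteriorAlgebra ℂ V)) ^ k →
      ∀ β,
        inn ((Complex.I • (ω * α)) * cj β) (cMonomial b Finset.univ)
          + (-1 : ℂ) ^ ((2 * d + 1) * k) *
              inn (α * cj (Complex.I • (ω * β))) (cMonomial b Finset.univ) = 0) ∧
    (∀ (k : ℕ) (α : ExteriorAlgebra ℂ V),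
      α ∈ (LinearMap.range (ι ℂ : V →ₗ[ℂ] ExteriorAlgebra ℂ V)) ^ k →
      ∀ β,
        inn (A α * cj β) (cMonomial b Finset.univ)
          + (-1 : ℂ) ^ ((2 * d + 1) * k) *
              inn (α * cj (A β)) (cMonomial b Finset.univ) = 0) := by
  classical
  have inn_zl : ∀ y, inn 0 y = 0 := by
    intro y
    have h := inn_addl 0 0 y
    rw [add_zero] at h
    exact (left_eq_add.mp h)
  have inn_zr : ∀ x, inn x 0 = 0 := by
    intro x
    have h := inn_addr x 0 0
    rw [add_zero] at h
    exact (left_eq_add.mp h)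
  have inn_suml : ∀ {κ : Type} (S : Finset κ) (f : κ → ExteriorAlgebra ℂ V) y,
      inn (∑ i ∈ S, f i) y = ∑ i ∈ S, inn (f i) y := by
    intro κ S f y
    exact map_sum (AddMonoidHom.mk' (fun x => inn x y) (fun a c => inn_addl a c y)) f S
  have inn_sumr : ∀ {κ : Type} (S : Finset κ) x (f : κ → ExteriorAlgebra ℂ V),
      inn x (∑ i ∈ S, f i) = ∑ i ∈ S, inn x (f i) := by
    intro κ S x f
    exact map_sum (AddMonoidHom.mk' (fun y => inn x y) (fun a c => inn_addr x a c)) f S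
  have inn_subr : ∀ x y z, inn x (y - z) = inn x y - inn x z := by
    intro x y z
    have : y - z = y + (-1 : ℂ) • z := by rw [neg_smul, one_smul]; abel
    rw [this, inn_addr, inn_smr]
    simp only [map_neg, map_one, neg_mul, one_mul]
    ring
  have mon_ne : ∀ s : Finset (Fin n), cMonomial b s ≠ 0 := by
    intro s h
    have h2 := inn_mon s s
    rw [h, inn_zl, if_pos rfl] at h2
    exact zero_ne_one h2
  have smul_cancel : ∀ (a c : ℂ) (s : Finset (Fin n)),
      a • cMonomial b s = c • cMonomial b s → a = c := by
    intro a c s h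
    have h2 : (a - c) • cMonomial b s = 0 := by rw [sub_smul, h, sub_self]
    rcases smul_eq_zero.mp h2 with h3 | h3
    · exact sub_eq_zero.mp h3
    · exact absurd h3 (mon_ne s)
  have recx : ∀ x : ExteriorAlgebra ℂ V,
      x = ∑ s : Finset (Fin n), (starRingEnd ℂ) (inn (cMonomial b s) x) • cMonomial b s := by
    intro x
    have hx : x ∈ Submodule.span ℂ (Set.range (cMonomial b)) := by
      rw [span_mon_top b]; trivial
    induction hx using Submodule.span_induction with
    | mem x hx =>
      obtain ⟨t, rfl⟩ := hx
      have : ∀ s : Finset (Fin n),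
          (starRingEnd ℂ) (inn (cMonomial b s) (cMonomial b t)) • cMonomial b s
          = if s = t then cMonomial b s else 0 := by
        intro s
        rw [inn_mon]
        split <;> simp
      rw [Finset.sum_congr rfl (fun s _ => this s), Finset.sum_ite_eq' Finset.univ t
        (fun s => cMonomial b s)]
      simp
    | zero => simp [inn_zr]
    | add x y _ _ hx hy =>
      conv_lhs => rw [hx, hy]
      rw [← Finset.sum_add_distrib]
      congr 1
      funext s
      rw [inn_addr, map_add, add_smul]
    | smul c x _ hx =>
      conv_lhs => rw [hx]
      rw [Finset.smul_sum]
      congr 1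
      funext s
      rw [inn_smr, map_mul, Complex.conj_conj, smul_smul]
  have ndg : ∀ x : ExteriorAlgebra ℂ V, (∀ s, inn (cMonomial b s) x = 0) → x = 0 := by
    intro x h
    rw [recx x]
    simp [h]
  have coef_zero : ∀ (k : ℕ) (x : ExteriorAlgebra ℂ V), x ∈ Sk b k →
      ∀ s : Finset (Fin n), s.card ≠ k → inn (cMonomial b s) x = 0 := by
    intro k x hx s hs
    induction hx using Submodule.span_induction with
    | mem x hx =>
      obtain ⟨t, ht, rfl⟩ := hx
      rw [inn_mon, if_neg]
      rintro rfl
      exact hs ht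
    | zero => exact inn_zr _
    | add x y _ _ hx hy => rw [inn_addr, hx, hy, add_zero]
    | smul c x _ hx => rw [inn_smr, hx, mul_zero]
  have redT : ∀ (F : ExteriorAlgebra ℂ V → ℂ) (τ : ℂ → ℂ),
      (∀ x y, F (x + y) = F x + F y) → (∀ c x, F (c • x) = τ c * F (x)) →
      (∀ t, F (cMonomial b t) = 0) → ∀ x, F x = 0 := by
    intro F τ hadd hsmul hmon x
    have : F x = (AddMonoidHom.mk' F hadd) x := rfl
    rw [this, recx x, map_sum]
    have : ∀ s : Finset (Fin n),
        (AddMonoidHom.mk' F hadd) ((starRingEnd ℂ) (inn (cMonomial b s) x) • cMonomial b s)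
        = 0 := by
      intro s
      show F _ = 0
      rw [hsmul, hmon, mul_zero]
    rw [Finset.sum_congr rfl (fun s _ => this s), Finset.sum_const_zero]
  -- decomposition of ω
  set g : Finset (Fin n) → ℂ := fun s => inn (cMonomial b s) ω with hg
  have g_real : ∀ s, (starRingEnd ℂ) (g s) = g s := by
    have : ∀ x ∈ Sr b, ∀ s, (starRingEnd ℂ) (inn (cMonomial b s) x) = inn (cMonomial b s) x := by
      intro x hx
      induction hx using Submodule.span_induction with
      | mem x hx =>
        obtain ⟨t, rfl⟩ := hx
        intro s
        rw [inn_mon]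
        split <;> simp
      | zero => intro s; rw [inn_zr]; simp
      | add x y _ _ hx hy => intro s; rw [inn_addr, map_add, hx s, hy s]
      | smul r x _ hx =>
        intro s
        have hrs : r • x = ((r : ℂ)) • x := (IsScalarTower.algebraMap_smul ℂ r x).symm
        erw [hrs]; rw [inn_smr, map_mul, Complex.conj_conj, Complex.conj_ofReal, hx s]
    exact fun s => this ω hω_real s
  have g_deg : ∀ s : Finset (Fin n), s.card ≠ 2 * d + 1 → g s = 0 := by
    intro s hs
    have hω : ω ∈ Sk b (2 * d + 1) := by rw [← pow_eq_Sk b]; exact hω_odd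
    exact coef_zero _ _ hω s hs
  have ω_eq : ω = ∑ s : Finset (Fin n), g s • cMonomial b s := by
    conv_lhs => rw [recx ω]
    congr 1
    funext s
    rw [hg]
    simp only []
    rw [g_real s]
  -- finset helpers
  have card_le_n : ∀ s : Finset (Fin n), s.card ≤ n := by
    intro s
    have := Finset.card_le_univ s
    simpa using this
  have card_compl' : ∀ s : Finset (Fin n), sᶜ.card = n - s.card := by
    intro s
    simp [Finset.card_compl]
  have compl_eq_of : ∀ {a c : Finset (Fin n)}, Disjoint a c → a ∪ c = Finset.univ → c = aᶜ := by
    intro a c hd hu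
    ext i
    rw [Finset.mem_compl]
    constructor
    · intro hic hia
      exact Finset.disjoint_left.mp hd hia hic
    · intro hia
      have : i ∈ a ∪ c := hu ▸ Finset.mem_univ i
      rcases Finset.mem_union.mp this with h | h
      · exact absurd h hia
      · exact h
  have subset_of_disjoint_compl : ∀ {a t : Finset (Fin n)}, Disjoint a tᶜ → a ⊆ t := by
    intro a t hd i hia
    by_contra hit
    exact Finset.disjoint_left.mp hd hia (Finset.mem_compl.mpr hit)
  have innW0 : ∀ a c : Finset (Fin n), c ≠ aᶜ →
      inn (cMonomial b a * cMonomial b c) (cMonomial b Finset.univ) = 0 := by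
    intro a c hne
    by_cases hd : Disjoint a c
    · obtain ⟨e, he, hm⟩ := mon_mul_mon b hd
      rw [hm, inn_sml, inn_mon, if_neg, mul_zero]
      intro hu
      exact hne (compl_eq_of hd hu)
    · rw [mon_mul_mon_of_not_disjoint b hd, inn_zl]
  -- the Hodge star on monomials
  have st_mon : ∀ t : Finset (Fin n), ∃ c : ℂ, IsSign c ∧
      cMonomial b t * cMonomial b tᶜ = c • cMonomial b Finset.univ ∧
      st (cMonomial b t) = c • cMonomial b tᶜ := by
    intro t
    obtain ⟨c, hc, hp⟩ := mon_mul_mon b (disjoint_compl_right : Disjoint t tᶜ)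
    rw [Finset.union_compl] at hp
    refine ⟨c, hc, hp, ?_⟩
    set y := st (cMonomial b t) - c • cMonomial b tᶜ with hy
    have hysk : y ∈ Sk b (n - t.card) := by
      refine Submodule.sub_mem _ ?_ (Submodule.smul_mem _ _ (mon_mem_Sk b (card_compl' t)))
      rw [← pow_eq_Sk b]
      exact st_deg t
    have hyzero : y = 0 := by
      apply ndg
      intro s
      by_cases hcard : s.card = n - t.card
      · -- multiply by the complementary monomial
        have hmulz : cMonomial b sᶜ * y = 0 := by
          have hcc : sᶜ.card = t.card := by
            have h1 := card_le_n t
            rw [card_compl', hcard]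
            omega
          rw [hy, mul_sub, st_char sᶜ t hcc, mul_smul_comm]
          by_cases hst : sᶜ = t
          · rw [if_pos hst, hst, hp, smul_smul, hc.mul_self, sub_self]
          · rw [if_neg hst, zero_smul, zero_sub, neg_eq_zero]
            have hnd : ¬ Disjoint sᶜ tᶜ := by
              intro hdisj
              have hsub : sᶜ ⊆ t := subset_of_disjoint_compl hdisj
              exact hst (Finset.eq_of_subset_of_card_le hsub (by rw [hcc]))
            rw [mon_mul_mon_of_not_disjoint b hnd, smul_zero]
        have hrec := recx y
        have hterm : ∀ v : Finset (Fin n), v ≠ s →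
            (starRingEnd ℂ) (inn (cMonomial b v) y) • (cMonomial b sᶜ * cMonomial b v) = 0 := by
          intro v hv
          by_cases hvc : v.card = n - t.card
          · have hnd : ¬ Disjoint sᶜ v := by
              intro hdisj
              have hsub : v ⊆ s := subset_of_disjoint_compl hdisj.symm
              exact hv (Finset.eq_of_subset_of_card_le hsub (by rw [hvc, hcard]))
            rw [mon_mul_mon_of_not_disjoint b hnd, smul_zero]
          · rw [coef_zero _ _ hysk v hvc, map_zero, zero_smul]
        have hexp : cMonomial b sᶜ * y
            = (starRingEnd ℂ) (inn (cMonomial b s) y) • (cMonomial b sᶜ * cMonomial b s) := by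
          conv_lhs => rw [hrec]
          rw [Finset.mul_sum]
          have : ∀ v : Finset (Fin n),
              cMonomial b sᶜ * ((starRingEnd ℂ) (inn (cMonomial b v) y) • cMonomial b v)
              = (starRingEnd ℂ) (inn (cMonomial b v) y) • (cMonomial b sᶜ * cMonomial b v) := by
            intro v
            rw [mul_smul_comm]
          rw [Finset.sum_congr rfl (fun v _ => this v)]
          exact Finset.sum_eq_single s (fun v _ hv => hterm v hv) (by intro h; exact absurd (Finset.mem_univ s) h)
        obtain ⟨e, he, hm⟩ := mon_mul_mon b (disjoint_compl_left : Disjoint sᶜ s)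
        have hcu : sᶜ ∪ s = Finset.univ := by rw [Finset.union_comm, Finset.union_compl]
        rw [hcu] at hm
        rw [hmulz, hm, smul_smul] at hexp
        have h0 : (0 : ℂ) • cMonomial b Finset.univ
            = ((starRingEnd ℂ) (inn (cMonomial b s) y) * e) • cMonomial b Finset.univ := by
          rw [zero_smul]; exact hexp
        have h1 := (smul_cancel _ _ _ h0).symm
        rcases mul_eq_zero.mp h1 with h2 | h2
        · have := congrArg (starRingEnd ℂ) h2
          rwa [Complex.conj_conj, map_zero] at this
        · exact absurd h2 he.ne_zero
      · exact coef_zero _ _ hysk s hcard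
    have := sub_eq_zero.mp hyzero
    exact this
  have disjoint_compl_of_subset : ∀ {a t : Finset (Fin n)}, a ⊆ t → Disjoint a tᶜ := by
    intro a t h
    rw [Finset.disjoint_left]
    intro i hia hic
    exact Finset.mem_compl.mp hic (h hia)
  have parity1 : ∀ s t : Finset (Fin n), t.card = 2 * d + 1 + s.card → t.card ≤ n →
      ((-1 : ℂ)) ^ (tᶜ.card * s.card) = (-1 : ℂ) ^ ((2 * d + 1) * s.card) := by
    intro s t htc htn
    obtain ⟨m, hm⟩ := hn
    rw [card_compl' t]
    rcases Nat.even_or_odd s.card with hS | hS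
    · rw [(Nat.even_mul.mpr (Or.inr hS)).neg_one_pow, (Nat.even_mul.mpr (Or.inr hS)).neg_one_pow]
    · obtain ⟨j, hj⟩ := hS
      have h1 : Odd (n - t.card) := ⟨m - d - j - 1, by omega⟩
      have h2 : Odd ((n - t.card) * s.card) := Odd.mul h1 ⟨j, hj⟩
      have h3 : Odd ((2 * d + 1) * s.card) := Odd.mul ⟨d, by ring⟩ ⟨j, hj⟩
      rw [h2.neg_one_pow, h3.neg_one_pow]
  have key1u : ∀ u s t : Finset (Fin n), u.card = 2 * d + 1 →
      inn (cMonomial b s) (st (cMonomial b u * st (cMonomial b t)))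
        = (-1 : ℂ) ^ ((2 * d + 1) * s.card) * inn (cMonomial b u * cMonomial b s) (cMonomial b t) := by
    intro u s t hu
    obtain ⟨ct, hct, hpt, hstt⟩ := st_mon t
    rw [hstt, mul_smul_comm, map_smul]
    by_cases hd : Disjoint u tᶜ
    · obtain ⟨f, hf, hmf⟩ := mon_mul_mon b hd
      rw [hmf, map_smul]
      obtain ⟨e, hesgn, hpw, hstw⟩ := st_mon (u ∪ tᶜ)
      rw [hstw, inn_smr, inn_smr, inn_smr, hct.conj, hf.conj, hesgn.conj, inn_mon]
      by_cases hd2 : Disjoint u s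
      · obtain ⟨gg, hgg, hmg⟩ := mon_mul_mon b hd2
        rw [hmg, inn_sml, inn_mon]
        by_cases heq : u ∪ s = t
        · have hseq : s = (u ∪ tᶜ)ᶜ := by
            ext i
            simp only [Finset.mem_compl, Finset.mem_union, not_or, not_not]
            constructor
            · intro his
              refine ⟨fun hiu => Finset.disjoint_left.mp hd2 hiu his, ?_⟩
              rw [← heq]
              exact Finset.mem_union_right u his
            · rintro ⟨hiu, hit⟩
              have h2 : i ∈ u ∪ s := by rw [heq]; exact hit
              rcases Finset.mem_union.mp h2 with h3 | h3
              · exact absurd h3 hiu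
              · exact h3
          rw [if_pos hseq, if_pos heq, mul_one, mul_one]
          -- now the sign identity
          have hsub : s ⊆ t := by rw [← heq]; exact Finset.subset_union_right
          have hdsr : Disjoint s tᶜ := disjoint_compl_of_subset hsub
          obtain ⟨a, ha, hma⟩ := mon_mul_mon b hdsr
          have hdusr : Disjoint u (s ∪ tᶜ) := Finset.disjoint_union_right.mpr ⟨hd2, hd⟩
          obtain ⟨q, hq, hmq⟩ := mon_mul_mon b hdusr
          have huq : u ∪ (s ∪ tᶜ) = Finset.univ := by
            rw [← Finset.union_assoc, heq, Finset.union_compl]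
          have hA1 : (gg * ct) • cMonomial b Finset.univ = (a * q) • cMonomial b Finset.univ := by
            calc (gg * ct) • cMonomial b Finset.univ
                = (cMonomial b u * cMonomial b s) * cMonomial b tᶜ := by
                  rw [hmg, smul_mul_assoc, heq, hpt, smul_smul]
              _ = cMonomial b u * (cMonomial b s * cMonomial b tᶜ) := mul_assoc _ _ _
              _ = (a * q) • cMonomial b Finset.univ := by
                  rw [hma, mul_smul_comm, hmq, smul_smul, huq]
          have e1 : gg * ct = a * q := smul_cancel _ _ _ hA1
          have hpw' : cMonomial b (u ∪ tᶜ) * cMonomial b s = e • cMonomial b Finset.univ := by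
            rw [hseq]; exact hpw
          have hA2 : (f * e) • cMonomial b Finset.univ
              = ((-1 : ℂ) ^ (tᶜ.card * s.card) * (a * q)) • cMonomial b Finset.univ := by
            calc (f * e) • cMonomial b Finset.univ
                = (cMonomial b u * cMonomial b tᶜ) * cMonomial b s := by
                  rw [hmf, smul_mul_assoc, hpw', smul_smul]
              _ = cMonomial b u * (cMonomial b tᶜ * cMonomial b s) := mul_assoc _ _ _
              _ = ((-1 : ℂ) ^ (tᶜ.card * s.card) * (a * q)) • cMonomial b Finset.univ := by
                  rw [mon_comm b tᶜ s, hma, smul_smul, mul_smul_comm, hmq, smul_smul, huq,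
                    mul_assoc]
          have e2 : f * e = (-1 : ℂ) ^ (tᶜ.card * s.card) * (a * q) := smul_cancel _ _ _ hA2
          have htc : t.card = 2 * d + 1 + s.card := by
            rw [← heq, Finset.card_union_of_disjoint hd2, hu]
          have hpar := parity1 s t htc (card_le_n t)
          calc ct * (f * e) = ct * ((-1 : ℂ) ^ (tᶜ.card * s.card) * (a * q)) := by rw [e2]
            _ = ct * ((-1 : ℂ) ^ (tᶜ.card * s.card) * (gg * ct)) := by rw [e1]
            _ = (-1 : ℂ) ^ (tᶜ.card * s.card) * gg * (ct * ct) := by ring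
            _ = (-1 : ℂ) ^ ((2 * d + 1) * s.card) * gg := by
                rw [hct.mul_self, mul_one, hpar]
        · have hsne : s ≠ (u ∪ tᶜ)ᶜ := by
            intro hseq
            apply heq
            have husub : u ⊆ t := by
              intro i hiu
              by_contra hit
              exact Finset.disjoint_left.mp hd hiu (Finset.mem_compl.mpr hit)
            ext i
            simp only [Finset.mem_union]
            constructor
            · rintro (hiu | his)
              · exact husub hiu
              · rw [hseq] at his
                simp only [Finset.mem_compl, Finset.mem_union, not_or, not_not] at his
                exact his.2
            · intro hit
              by_cases hiu : i ∈ u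
              · exact Or.inl hiu
              · refine Or.inr ?_
                rw [hseq]
                simp only [Finset.mem_compl, Finset.mem_union, not_or, not_not]
                exact ⟨hiu, hit⟩
          rw [if_neg hsne, if_neg heq]
          ring
      · have hsne : s ≠ (u ∪ tᶜ)ᶜ := by
          intro hseq
          apply hd2
          rw [Finset.disjoint_left]
          intro i hiu his
          rw [hseq] at his
          simp only [Finset.mem_compl, Finset.mem_union, not_or] at his
          exact absurd hiu his.1
        rw [mon_mul_mon_of_not_disjoint b hd2, inn_zl, if_neg hsne]
        ring
    · rw [mon_mul_mon_of_not_disjoint b hd, map_zero, smul_zero, inn_zr]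
      by_cases hd2 : Disjoint u s
      · obtain ⟨gg, hgg, hmg⟩ := mon_mul_mon b hd2
        have hne : u ∪ s ≠ t := fun heq =>
          hd (disjoint_compl_of_subset (by rw [← heq]; exact Finset.subset_union_left))
        rw [hmg, inn_sml, inn_mon, if_neg hne]
        ring
      · rw [mon_mul_mon_of_not_disjoint b hd2, inn_zl, mul_zero]
  have key1 : ∀ s t : Finset (Fin n), inn (cMonomial b s) (st (ω * st (cMonomial b t)))
      = (-1 : ℂ) ^ ((2 * d + 1) * s.card) * inn (ω * cMonomial b s) (cMonomial b t) := by
    intro s t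
    conv_lhs => rw [ω_eq, Finset.sum_mul]
    conv_rhs => rw [ω_eq, Finset.sum_mul]
    rw [map_sum, inn_sumr, inn_suml, Finset.mul_sum]
    refine Finset.sum_congr rfl ?_
    intro u _
    rw [smul_mul_assoc, map_smul, inn_smr, g_real u, smul_mul_assoc, inn_sml]
    by_cases hgu : g u = 0
    · rw [hgu]; ring
    · have hcu : u.card = 2 * d + 1 := by
        by_contra h
        exact hgu (g_deg u h)
      rw [key1u u s t hcu]
      ring
  have epssq : ∀ k : ℕ, ((-1 : ℂ)) ^ ((2 * d + 1) * k) * ((-1 : ℂ)) ^ ((2 * d + 1) * k) = 1 :=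
    fun k => IsSign.mul_self (IsSign.neg_one_pow _)
  have goal1 : ∀ β, A β = st (ω * st β) := by
    intro β
    have hF : ∀ s : Finset (Fin n), inn (cMonomial b s) (st (ω * st β))
        = (-1 : ℂ) ^ ((2 * d + 1) * s.card) * inn (ω * cMonomial b s) β := by
      intro s
      have hβ : β ∈ Submodule.span ℂ (Set.range (cMonomial b)) := by
        rw [span_mon_top b]; trivial
      induction hβ using Submodule.span_induction with
      | mem x hx =>
        obtain ⟨t, rfl⟩ := hx
        exact key1 s t
      | zero =>
        rw [map_zero, mul_zero, map_zero, inn_zr, inn_zr, mul_zero]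
      | add x y _ _ hx hy =>
        rw [map_add, mul_add, map_add, inn_addr, inn_addr, hx, hy]
        ring
      | smul c x _ hx =>
        rw [map_smul, mul_smul_comm, map_smul, inn_smr, inn_smr, hx]
        ring
    have hsame : ∀ s : Finset (Fin n),
        inn (cMonomial b s) (A β - st (ω * st β)) = 0 := by
      intro s
      rw [inn_subr, hF s]
      have h1 := hA s.card (cMonomial b s) (mon_mem_pow b s) β
      rw [h1, ← mul_assoc, epssq s.card, one_mul, sub_self]
    exact sub_eq_zero.mp (ndg _ hsame)
  have cj_fix : ∀ x ∈ Sr b, cj x = x := by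
    intro x hx
    induction hx using Submodule.span_induction with
    | mem y hy => obtain ⟨t, rfl⟩ := hy; exact cj_mon t
    | zero => exact map_zero cj
    | add y z _ _ hy hz => rw [map_add, hy, hz]
    | smul r y _ hy =>
      have hrs : r • y = ((r : ℂ)) • y := (IsScalarTower.algebraMap_smul ℂ r y).symm
      erw [hrs]; rw [LinearMap.map_smulₛₗ, Complex.conj_ofReal, hy]
  have cjω : cj ω = ω := cj_fix ω hω_real
  have sc : ∀ (k : ℕ) (α : ExteriorAlgebra ℂ V),
      α ∈ (LinearMap.range (ι ℂ : V →ₗ[ℂ] ExteriorAlgebra ℂ V)) ^ k →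
      ω * α = ((-1 : ℂ) ^ ((2 * d + 1) * k)) • (α * ω) := by
    intro k α hα
    rw [pow_eq_Sk b] at hα
    induction hα using Submodule.span_induction with
    | mem x hx =>
      obtain ⟨u', hu', rfl⟩ := hx
      conv_lhs => rw [ω_eq, Finset.sum_mul]
      conv_rhs => rw [ω_eq, Finset.mul_sum, Finset.smul_sum]
      refine Finset.sum_congr rfl ?_
      intro u _
      rw [smul_mul_assoc, mul_smul_comm, smul_comm]
      by_cases hgu : g u = 0
      · rw [hgu, zero_smul, zero_smul]
      · have hcu : u.card = 2 * d + 1 := by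
          by_contra h
          exact hgu (g_deg u h)
        rw [mon_comm b u u', hcu, hu']
    | zero => rw [mul_zero, zero_mul, smul_zero]
    | add x y _ _ hx hy =>
      rw [mul_add, hx, hy, show (x + y) * ω = x * ω + y * ω from add_mul x y ω]
      exact (smul_add ((-1 : ℂ) ^ ((2 * d + 1) * k)) (x * ω) (y * ω)).symm
    | smul c x _ hx => rw [mul_smul_comm, smul_mul_assoc, hx, smul_comm]
  have goal2 : ∀ (k : ℕ) (α : ExteriorAlgebra ℂ V),
      α ∈ (LinearMap.range (ι ℂ : V →ₗ[ℂ] ExteriorAlgebra ℂ V)) ^ k →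
      ∀ β,
        inn ((Complex.I • (ω * α)) * cj β) (cMonomial b Finset.univ)
          + (-1 : ℂ) ^ ((2 * d + 1) * k) *
              inn (α * cj (Complex.I • (ω * β))) (cMonomial b Finset.univ) = 0 := by
    intro k α hα β
    have hsc : ω * α = ((-1 : ℂ) ^ ((2 * d + 1) * k)) • (α * ω) := sc k α hα
    have hsc' : α * ω = ((-1 : ℂ) ^ ((2 * d + 1) * k)) • (ω * α) := by
      rw [hsc, smul_smul, epssq k, one_smul]
    rw [smul_mul_assoc, inn_sml, LinearMap.map_smulₛₗ, Complex.conj_I, cj_mul, cjω]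
    rw [mul_smul_comm, inn_sml]
    have hassoc : α * (ω * cj β) = ((-1 : ℂ) ^ ((2 * d + 1) * k)) • ((ω * α) * cj β) := by
      rw [← mul_assoc, hsc', smul_mul_assoc]
    rw [hassoc, inn_sml]
    linear_combination (-Complex.I * inn (ω * α * cj β) (cMonomial b Finset.univ)) * epssq k
  have st_real : ∀ x ∈ Sr b, st x ∈ Sr b := by
    intro x hx
    induction hx using Submodule.span_induction with
    | mem y hy =>
      obtain ⟨t, rfl⟩ := hy
      obtain ⟨c, hc, _, hst⟩ := st_mon t
      rw [hst]
      exact Sr_smul_sign b hc (Submodule.subset_span ⟨tᶜ, rfl⟩)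
    | zero => rw [map_zero]; exact Submodule.zero_mem _
    | add y z _ _ hy hz => rw [map_add]; exact Submodule.add_mem _ hy hz
    | smul r y _ hy =>
      have hrs : r • y = ((r : ℂ)) • y := (IsScalarTower.algebraMap_smul ℂ r y).symm
      have h2 : ((r : ℂ)) • st y = r • st y := IsScalarTower.algebraMap_smul ℂ r (st y)
      erw [hrs]; rw [map_smul, h2]
      exact Submodule.smul_mem _ r hy
  have ASr : ∀ t, st (ω * st (cMonomial b t)) ∈ Sr b := fun t =>
    st_real _ (Sr_mul b hω_real (st_real _ (Submodule.subset_span ⟨t, rfl⟩)))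
  have parity2 : ∀ P S : ℕ, S = (2 * d + 1) + P →
      ((-1 : ℂ)) ^ (P * (2 * d + 1)) = -((-1 : ℂ)) ^ ((2 * d + 1) * S) := by
    intro P S hS
    rcases Nat.even_or_odd P with hP | hP
    · rw [(Nat.even_mul.mpr (Or.inl hP)).neg_one_pow]
      obtain ⟨p2, hp2⟩ := hP
      have hodd : Odd ((2 * d + 1) * S) := Odd.mul ⟨d, by ring⟩ ⟨d + p2, by omega⟩
      rw [hodd.neg_one_pow, neg_neg]
    · obtain ⟨j, hj⟩ := hP
      have hodd : Odd (P * (2 * d + 1)) := Odd.mul ⟨j, hj⟩ ⟨d, by ring⟩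
      have heven : Even ((2 * d + 1) * S) := Nat.even_mul.mpr (Or.inr ⟨d + j + 1, by omega⟩)
      rw [hodd.neg_one_pow, heven.neg_one_pow]
  have key3u : ∀ u s t : Finset (Fin n), u.card = 2 * d + 1 →
      inn (st (cMonomial b u * st (cMonomial b s)) * cMonomial b t) (cMonomial b Finset.univ)
        + (-1 : ℂ) ^ ((2 * d + 1) * s.card) *
            inn (cMonomial b s * st (cMonomial b u * st (cMonomial b t)))
              (cMonomial b Finset.univ) = 0 := by
    intro u s t hu
    obtain ⟨cs, hcs, hps, hsts⟩ := st_mon s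
    obtain ⟨ct, hct, hpt, hstt⟩ := st_mon t
    rw [hsts, hstt, mul_smul_comm, mul_smul_comm, map_smul, map_smul]
    by_cases hds : Disjoint u sᶜ
    · obtain ⟨f1, hf1, hmf1⟩ := mon_mul_mon b hds
      rw [hmf1, map_smul]
      by_cases hdt : Disjoint u tᶜ
      · obtain ⟨f2, hf2, hmf2⟩ := mon_mul_mon b hdt
        rw [hmf2, map_smul]
        by_cases hteq : t = u ∪ sᶜ
        · -- main case
          have husub : u ⊆ s := subset_of_disjoint_compl hds
          have htcompl : tᶜ = s \ u := by
            rw [hteq]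
            ext i
            simp only [Finset.mem_compl, Finset.mem_union, Finset.mem_sdiff, not_or, not_not]
            tauto
          have husq : u ∪ tᶜ = s := by
            rw [htcompl]
            ext i
            simp only [Finset.mem_union, Finset.mem_sdiff]
            constructor
            · rintro (h | h)
              · exact husub h
              · exact h.1
            · intro h
              by_cases hiu : i ∈ u
              · exact Or.inl hiu
              · exact Or.inr ⟨h, hiu⟩
          rw [← hteq, hstt, husq, hsts]
          simp only [smul_mul_assoc, mul_smul_comm, inn_sml]
          obtain ⟨a1, ha1, hma1⟩ := mon_mul_mon b (disjoint_compl_left : Disjoint tᶜ t)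
          have hcu : tᶜ ∪ t = Finset.univ := by rw [Finset.union_comm, Finset.union_compl]
          have hv1 : inn (cMonomial b tᶜ * cMonomial b t) (cMonomial b Finset.univ) = a1 := by
            rw [hma1, hcu, inn_sml, inn_mon, if_pos rfl, mul_one]
          have hv2 : inn (cMonomial b s * cMonomial b sᶜ) (cMonomial b Finset.univ) = cs := by
            rw [hps, inn_sml, inn_mon, if_pos rfl, mul_one]
          rw [hv1, hv2]
          have c1 : cMonomial b tᶜ * cMonomial b u
              = ((-1 : ℂ) ^ (tᶜ.card * u.card) * f2) • cMonomial b s := by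
            rw [mon_comm b tᶜ u, hmf2, husq, smul_smul]
          have c2 : (cMonomial b tᶜ * cMonomial b u) * cMonomial b sᶜ
              = ((-1 : ℂ) ^ (tᶜ.card * u.card) * f2 * cs) • cMonomial b Finset.univ := by
            rw [c1, smul_mul_assoc, hps, smul_smul]
          have c3 : cMonomial b tᶜ * (cMonomial b u * cMonomial b sᶜ)
              = (f1 * a1) • cMonomial b Finset.univ := by
            rw [hmf1, mul_smul_comm, ← hteq, hma1, hcu, smul_smul]
          have hrel : (-1 : ℂ) ^ (tᶜ.card * u.card) * f2 * cs = f1 * a1 :=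
            smul_cancel _ _ _ (c2.symm.trans ((mul_assoc _ _ _).trans c3))
          rw [hu] at hrel
          have hScard : s.card = (2 * d + 1) + tᶜ.card := by
            have h1 : tᶜ.card = s.card - u.card := by rw [htcompl, Finset.card_sdiff_of_subset husub]
            have h2 := Finset.card_le_card husub
            omega
          have hpar := parity2 tᶜ.card s.card hScard
          linear_combination (-(ct * cs)) * hrel + (ct * f2 * cs * cs) * hpar
        · obtain ⟨e1, he1, _, hste1⟩ := st_mon (u ∪ sᶜ)
          obtain ⟨e2, he2, _, hste2⟩ := st_mon (u ∪ tᶜ)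
          rw [hste1, hste2]
          simp only [smul_mul_assoc, mul_smul_comm, inn_sml]
          have hz1 : inn (cMonomial b (u ∪ sᶜ)ᶜ * cMonomial b t) (cMonomial b Finset.univ)
              = 0 := by
            apply innW0
            rw [compl_compl]
            exact hteq
          have hz2 : inn (cMonomial b s * cMonomial b (u ∪ tᶜ)ᶜ) (cMonomial b Finset.univ)
              = 0 := by
            apply innW0
            intro h
            have h2 : u ∪ tᶜ = s := by
              have := congrArg (fun z : Finset (Fin n) => zᶜ) h
              simpa using this
            apply hteq
            have hut : u ⊆ t := subset_of_disjoint_compl hdt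
            have hsc2 : sᶜ = t \ u := by
              rw [← h2]
              ext i
              simp only [Finset.mem_compl, Finset.mem_union, Finset.mem_sdiff, not_or, not_not]
              tauto
            rw [hsc2]
            ext i
            simp only [Finset.mem_union, Finset.mem_sdiff]
            constructor
            · intro h3
              by_cases hiu : i ∈ u
              · exact Or.inl hiu
              · exact Or.inr ⟨h3, hiu⟩
            · rintro (h3 | h3)
              · exact hut h3
              · exact h3.1
          rw [hz1, hz2]
          ring
      · obtain ⟨e1, he1, _, hste1⟩ := st_mon (u ∪ sᶜ)
        rw [hste1, mon_mul_mon_of_not_disjoint b hdt, map_zero, smul_zero, mul_zero, inn_zl]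
        simp only [smul_mul_assoc, inn_sml]
        have hz1 : inn (cMonomial b (u ∪ sᶜ)ᶜ * cMonomial b t) (cMonomial b Finset.univ)
            = 0 := by
          apply innW0
          rw [compl_compl]
          intro h
          apply hdt
          rw [h]
          rw [Finset.disjoint_left]
          intro i hiu hic
          simp only [Finset.mem_compl, Finset.mem_union, not_or] at hic
          exact hic.1 hiu
        rw [hz1]
        ring
    · rw [mon_mul_mon_of_not_disjoint b hds, map_zero, smul_zero, zero_mul, inn_zl]
      by_cases hdt : Disjoint u tᶜ
      · obtain ⟨f2, hf2, hmf2⟩ := mon_mul_mon b hdt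
        obtain ⟨e2, he2, _, hste2⟩ := st_mon (u ∪ tᶜ)
        rw [hmf2, map_smul, hste2]
        simp only [mul_smul_comm, inn_sml]
        have hz2 : inn (cMonomial b s * cMonomial b (u ∪ tᶜ)ᶜ) (cMonomial b Finset.univ)
            = 0 := by
          apply innW0
          intro h
          have h2 : u ∪ tᶜ = s := by
            have := congrArg (fun z : Finset (Fin n) => zᶜ) h
            simpa using this
          apply hds
          apply disjoint_compl_of_subset
          rw [← h2]
          exact Finset.subset_union_left
        rw [hz2]
        ring
      · rw [mon_mul_mon_of_not_disjoint b hdt, map_zero, smul_zero, mul_zero, inn_zl]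
        ring
  have key3 : ∀ s t : Finset (Fin n),
      inn (A (cMonomial b s) * cj (cMonomial b t)) (cMonomial b Finset.univ)
        + (-1 : ℂ) ^ ((2 * d + 1) * s.card) *
            inn (cMonomial b s * cj (A (cMonomial b t))) (cMonomial b Finset.univ) = 0 := by
    intro s t
    rw [cj_mon t, goal1, goal1, cj_fix _ (ASr t)]
    rw [ω_eq]
    simp only [Finset.sum_mul, map_sum, smul_mul_assoc, map_smul, Finset.mul_sum,
      mul_smul_comm, inn_suml, inn_sml]
    rw [← Finset.sum_add_distrib]
    refine Finset.sum_eq_zero ?_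
    intro u _
    by_cases hgu : g u = 0
    · rw [hgu]; ring
    · have hcu : u.card = 2 * d + 1 := by
        by_contra h
        exact hgu (g_deg u h)
      linear_combination g u * key3u u s t hcu
  have goal3 : ∀ (k : ℕ) (α : ExteriorAlgebra ℂ V),
      α ∈ (LinearMap.range (ι ℂ : V →ₗ[ℂ] ExteriorAlgebra ℂ V)) ^ k →
      ∀ β,
        inn (A α * cj β) (cMonomial b Finset.univ)
          + (-1 : ℂ) ^ ((2 * d + 1) * k) *
              inn (α * cj (A β)) (cMonomial b Finset.univ) = 0 := by
    intro k α hα β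
    rw [pow_eq_Sk b] at hα
    induction hα using Submodule.span_induction with
    | mem x hx =>
      obtain ⟨s, hs, rfl⟩ := hx
      subst hs
      have hβ : β ∈ Submodule.span ℂ (Set.range (cMonomial b)) := by
        rw [span_mon_top b]; trivial
      induction hβ using Submodule.span_induction with
      | mem y hy =>
        obtain ⟨t, rfl⟩ := hy
        exact key3 s t
      | zero => simp only [map_zero, mul_zero, inn_zl]; ring
      | add y z _ _ hy hz =>
        simp only [map_add, mul_add, inn_addr, add_mul, inn_addl]
        linear_combination hy + hz
      | smul c y _ hy =>
        simp only [LinearMap.map_smulₛₗ, map_smul, mul_smul_comm, inn_sml]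
        linear_combination (starRingEnd ℂ) c * hy
    | zero => simp only [map_zero, zero_mul, inn_zl]; ring
    | add x y _ _ hx hy =>
      simp only [map_add, add_mul, inn_addl]
      linear_combination hx + hy
    | smul c x _ hx =>
      simp only [map_smul, smul_mul_assoc, inn_sml]
      linear_combination c * hx
  exact ⟨goal1, goal2, goal3⟩
end

section
/- A homogeneous operator φ on the complexified exterior algebra of an oriented odd-dimensional real inner product space preserves the odd pairing ⟨·,·⟩ (i.e., ⟨φ(α),β⟩ + (-1)^{deg(α)deg(φ)}⟨α,φ(β)⟩ = 0 for all homogeneous α,β) if and only if φ^⋆ = -*∘φ∘*, where ⋆ is the super-adjoint for the Hermitean inner product and * is the Hodge star. -/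
open ExteriorAlgebra

namespace Stmt9Aux

variable {n : ℕ} {V : Type*} [AddCommGroup V] [Module ℂ V] (b : Module.Basis (Fin n) ℂ V)

noncomputable def bProd (l : List (Fin n)) : ExteriorAlgebra ℂ V :=
  (l.map fun i => ι ℂ (b i)).prod

@[simp] lemma bProd_nil : bProd b ([] : List (Fin n)) = 1 := rfl

@[simp] lemma bProd_cons (i : Fin n) (l : List (Fin n)) :
    bProd b (i :: l) = ι ℂ (b i) * bProd b l := by
  simp [bProd]

lemma bProd_append (l m : List (Fin n)) : bProd b (l ++ m) = bProd b l * bProd b m := by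
  simp [bProd]

lemma cMonomial_eq (s : Finset (Fin n)) : cMonomial b s = bProd b (s.sort (· ≤ ·)) := rfl

@[simp] lemma cMonomial_empty : cMonomial b (∅ : Finset (Fin n)) = 1 := by
  simp [cMonomial]

lemma cMonomial_singleton (j : Fin n) : cMonomial b {j} = ι ℂ (b j) := by
  simp [cMonomial]

lemma ι_swap (x y : V) : ι ℂ x * ι ℂ y = -(ι ℂ y * ι ℂ x) :=
  eq_neg_of_add_eq_zero_left (ι_add_mul_swap x y)

lemma mul_bProd_eq_zero {i : Fin n} {l : List (Fin n)} (h : i ∈ l) :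
    ι ℂ (b i) * bProd b l = 0 := by
  induction l with
  | nil => cases h
  | cons j r ih =>
    rcases List.mem_cons.mp h with rfl | h'
    · rw [bProd_cons, ← mul_assoc, ι_sq_zero, zero_mul]
    · rw [bProd_cons, ← mul_assoc, ι_swap, neg_mul, mul_assoc, ih h', mul_zero, neg_zero]

lemma bProd_eq_zero_of_not_nodup {l : List (Fin n)} (h : ¬ l.Nodup) : bProd b l = 0 := by
  induction l with
  | nil => exact absurd List.nodup_nil h
  | cons j r ih =>
    rw [List.nodup_cons] at h
    push_neg at h
    by_cases hj : j ∈ r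
    · rw [bProd_cons, mul_bProd_eq_zero b hj]
    · rw [bProd_cons, ih (h hj), mul_zero]

lemma mul_bProd_orderedInsert (i : Fin n) (l : List (Fin n)) :
    ∃ c : ℂ, (c = 1 ∨ c = -1) ∧
      ι ℂ (b i) * bProd b l = c • bProd b (List.orderedInsert (· ≤ ·) i l) := by
  induction l with
  | nil => exact ⟨1, Or.inl rfl, by simp⟩
  | cons j r ih =>
    by_cases h : i ≤ j
    · exact ⟨1, Or.inl rfl, by simp [List.orderedInsert, h]⟩
    · obtain ⟨c, hc, heq⟩ := ih
      refine ⟨-c, by rcases hc with rfl | rfl <;> simp, ?_⟩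
      rw [bProd_cons, ← mul_assoc, ι_swap, neg_mul, mul_assoc, heq, mul_smul_comm]
      simp only [List.orderedInsert, if_neg h, bProd_cons]
      rw [neg_smul]

lemma sort_insert_orderedInsert {i : Fin n} {s : Finset (Fin n)} (h : i ∉ s) :
    (insert i s).sort (· ≤ ·) = List.orderedInsert (· ≤ ·) i (s.sort (· ≤ ·)) := by
  refine List.Perm.eq_of_pairwise' (Finset.pairwise_sort _ _)
    ((Finset.pairwise_sort _ _).orderedInsert i _) ?_
  exact (Finset.sort_perm_toList _ _).trans ((Finset.toList_insert h).trans
    (((Finset.sort_perm_toList _ _).symm.cons i).trans (List.perm_orderedInsert _ _ _).symm))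

lemma ι_mul_cMonomial {i : Fin n} {s : Finset (Fin n)} (h : i ∉ s) :
    ∃ c : ℂ, (c = 1 ∨ c = -1) ∧
      ι ℂ (b i) * cMonomial b s = c • cMonomial b (insert i s) := by
  obtain ⟨c, hc, heq⟩ := mul_bProd_orderedInsert b i (s.sort (· ≤ ·))
  exact ⟨c, hc, by rw [cMonomial_eq, heq, cMonomial_eq, sort_insert_orderedInsert h]⟩

lemma cMonomial_mul_disjoint (s t : Finset (Fin n)) (h : Disjoint s t) :
    ∃ c : ℂ, (c = 1 ∨ c = -1) ∧
      cMonomial b s * cMonomial b t = c • cMonomial b (s ∪ t) := by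
  induction s using Finset.induction_on with
  | empty => exact ⟨1, Or.inl rfl, by simp⟩
  | @insert a s' ha ih =>
    rw [Finset.disjoint_insert_left] at h
    obtain ⟨hat, hdisj⟩ := h
    obtain ⟨c₂, hc₂, h₂⟩ := ih hdisj
    obtain ⟨c₁, hc₁, h₁⟩ := ι_mul_cMonomial b ha
    have ha2 : a ∉ s' ∪ t := by simp [ha, hat]
    obtain ⟨c₃, hc₃, h₃⟩ := ι_mul_cMonomial b ha2
    have hM : cMonomial b (insert a s') = c₁ • (ι ℂ (b a) * cMonomial b s') := by
      rw [h₁, smul_smul]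
      rcases hc₁ with rfl | rfl <;> simp
    refine ⟨c₁ * c₂ * c₃, ?_, ?_⟩
    · rcases hc₁ with rfl | rfl <;> rcases hc₂ with rfl | rfl <;>
        rcases hc₃ with rfl | rfl <;> norm_num
    · rw [hM, smul_mul_assoc, mul_assoc, h₂, mul_smul_comm, h₃, Finset.insert_union]
      rw [smul_smul, smul_smul, mul_assoc]

lemma cMonomial_mul_zero (s t : Finset (Fin n)) (h : ¬ Disjoint s t) :
    cMonomial b s * cMonomial b t = 0 := by
  rw [Finset.not_disjoint_iff] at h
  obtain ⟨i, his, hit⟩ := h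
  rw [cMonomial_eq, cMonomial_eq, ← bProd_append]
  apply bProd_eq_zero_of_not_nodup
  intro hnd
  obtain ⟨-, -, hd⟩ := List.nodup_append.mp hnd
  exact hd _ ((Finset.mem_sort _).mpr his) _ ((Finset.mem_sort _).mpr hit) rfl

lemma ι_bProd_comm (x : V) (m : List (Fin n)) :
    ι ℂ x * bProd b m = ((-1 : ℂ)) ^ m.length • (bProd b m * ι ℂ x) := by
  induction m with
  | nil => simp
  | cons j r ih =>
    rw [bProd_cons, ← mul_assoc, ι_swap, neg_mul, mul_assoc, ih, mul_smul_comm,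
      List.length_cons, pow_succ, mul_neg_one, neg_smul]
    simp [mul_assoc]

lemma bProd_comm (l m : List (Fin n)) :
    bProd b l * bProd b m = ((-1 : ℂ)) ^ (l.length * m.length) • (bProd b m * bProd b l) := by
  induction l with
  | nil => simp
  | cons a l ih =>
    rw [bProd_cons, mul_assoc, ih, mul_smul_comm, ← mul_assoc, ι_bProd_comm, smul_mul_assoc,
      smul_smul, ← pow_add, List.length_cons, add_one_mul]
    simp [mul_assoc]

lemma cMonomial_comm (s t : Finset (Fin n)) :
    cMonomial b s * cMonomial b t
      = ((-1 : ℂ)) ^ (s.card * t.card) • (cMonomial b t * cMonomial b s) := by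
  rw [cMonomial_eq, cMonomial_eq, bProd_comm, Finset.length_sort, Finset.length_sort]

lemma bProd_mem (l : List (Fin n)) :
    bProd b l ∈ (LinearMap.range (ι ℂ : V →ₗ[ℂ] ExteriorAlgebra ℂ V)) ^ l.length := by
  induction l with
  | nil =>
    rw [List.length_nil, pow_zero]
    exact Submodule.one_le.mp le_rfl
  | cons a l ih =>
    rw [bProd_cons, List.length_cons, pow_succ']
    exact Submodule.mul_mem_mul ⟨b a, rfl⟩ ih

lemma cMonomial_mem (s : Finset (Fin n)) :
    cMonomial b s ∈ (LinearMap.range (ι ℂ : V →ₗ[ℂ] ExteriorAlgebra ℂ V)) ^ s.card := by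
  rw [cMonomial_eq]
  have := bProd_mem b (s.sort (· ≤ ·))
  rwa [Finset.length_sort] at this

variable {n : ℕ} {V : Type*} [AddCommGroup V] [Module ℂ V] (b : Module.Basis (Fin n) ℂ V)

lemma ι_expand (v : V) : (ι ℂ) v = ∑ j, b.repr v j • (ι ℂ : V →ₗ[ℂ] ExteriorAlgebra ℂ V) (b j) := by
  conv_lhs => rw [← Module.Basis.sum_repr b v]
  rw [map_sum]
  simp

lemma ι_basis_mul_mem_span (j : Fin n) (s : Finset (Fin n)) (k : ℕ) (hs : s.card = k) :
    ι ℂ (b j) * cMonomial b s ∈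
      Submodule.span ℂ (cMonomial b '' {u : Finset (Fin n) | u.card = k + 1}) := by
  by_cases hj : j ∈ s
  · have h0 : ι ℂ (b j) * cMonomial b s = 0 := by
      rw [cMonomial_eq]; exact mul_bProd_eq_zero b ((Finset.mem_sort _).mpr hj)
    rw [h0]; exact Submodule.zero_mem _
  · obtain ⟨c, hc, heq⟩ := ι_mul_cMonomial b hj
    rw [heq]
    exact Submodule.smul_mem _ _ (Submodule.subset_span
      ⟨insert j s, by simp [Finset.card_insert_of_notMem hj, hs], rfl⟩)

lemma ι_mul_mem_span (v : V) (k : ℕ) (x : ExteriorAlgebra ℂ V)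
    (hx : x ∈ Submodule.span ℂ (cMonomial b '' {u : Finset (Fin n) | u.card = k})) :
    ι ℂ v * x ∈ Submodule.span ℂ (cMonomial b '' {u : Finset (Fin n) | u.card = k + 1}) := by
  induction hx using Submodule.span_induction with
  | mem y hy =>
    obtain ⟨s, hs, rfl⟩ := hy
    rw [ι_expand b v, Finset.sum_mul]
    refine Submodule.sum_mem _ fun j _ => ?_
    rw [smul_mul_assoc]
    exact Submodule.smul_mem _ _ (ι_basis_mul_mem_span b j s k hs)
  | zero => rw [mul_zero]; exact Submodule.zero_mem _
  | add y z _ _ hy hz => rw [mul_add]; exact add_mem hy hz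
  | smul c y _ hy => rw [mul_smul_comm]; exact Submodule.smul_mem _ _ hy

lemma mem_span_monoSet (k : ℕ) (x : ExteriorAlgebra ℂ V)
    (hx : x ∈ (LinearMap.range (ι ℂ : V →ₗ[ℂ] ExteriorAlgebra ℂ V)) ^ k) :
    x ∈ Submodule.span ℂ (cMonomial b '' {u : Finset (Fin n) | u.card = k}) := by
  induction hx using Submodule.pow_induction_on_left' with
  | algebraMap r =>
    have h1 : (algebraMap ℂ (ExteriorAlgebra ℂ V)) r = r • cMonomial b ∅ := by
      rw [cMonomial_empty, Algebra.algebraMap_eq_smul_one]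
    rw [h1]
    exact Submodule.smul_mem _ _ (Submodule.subset_span ⟨∅, by simp, rfl⟩)
  | add x y i hx hy ihx ihy => exact add_mem ihx ihy
  | mem_mul m hm i x hx ihx =>
    obtain ⟨v, rfl⟩ := hm
    exact ι_mul_mem_span b v i x ihx

lemma mem_span_range (x : ExteriorAlgebra ℂ V) :
    x ∈ Submodule.span ℂ (Set.range (cMonomial b)) := by
  induction x using ExteriorAlgebra.induction with
  | algebraMap r =>
    have h1 : (algebraMap ℂ (ExteriorAlgebra ℂ V)) r = r • cMonomial b ∅ := by
      rw [cMonomial_empty, Algebra.algebraMap_eq_smul_one]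
    rw [h1]
    exact Submodule.smul_mem _ _ (Submodule.subset_span ⟨∅, rfl⟩)
  | ι v =>
    rw [ι_expand b v]
    exact Submodule.sum_mem _ fun j _ =>
      Submodule.smul_mem _ _ (Submodule.subset_span ⟨{j}, cMonomial_singleton b j⟩)
  | mul x y hx hy =>
    induction hx using Submodule.span_induction with
    | mem x' hx' =>
      induction hy using Submodule.span_induction with
      | mem y' hy' =>
        obtain ⟨s, rfl⟩ := hx'
        obtain ⟨t, rfl⟩ := hy'
        by_cases hd : Disjoint s t
        · obtain ⟨c, hc, h⟩ := cMonomial_mul_disjoint b s t hd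
          rw [h]
          exact Submodule.smul_mem _ _ (Submodule.subset_span ⟨_, rfl⟩)
        · rw [cMonomial_mul_zero b s t hd]; exact Submodule.zero_mem _
      | zero => rw [mul_zero]; exact Submodule.zero_mem _
      | add y z _ _ h1 h2 => rw [mul_add]; exact add_mem h1 h2
      | smul c y _ h1 => rw [mul_smul_comm]; exact Submodule.smul_mem _ _ h1
    | zero => rw [zero_mul]; exact Submodule.zero_mem _
    | add x' y' _ _ h1 h2 => rw [add_mul]; exact add_mem h1 h2
    | smul c x' _ h1 => rw [smul_mul_assoc]; exact Submodule.smul_mem _ _ h1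
  | add x y hx hy => exact add_mem hx hy

end Stmt9Aux

open Stmt9Aux

set_option maxHeartbeats 1000000

/-- a homogeneous operator `φ` of degree `dφ` on the complexified exterior
algebra of an oriented odd-dimensional real inner product space preserves the odd pairing
`⟨α,β⟩ = (α ∧ conj β, Ω)` in the super sense (i.e.
`⟨φ α, β⟩ + (-1)^(deg α · deg φ) ⟨α, φ β⟩ = 0` for all homogeneous `α` and all `β`)
if and only if `φ^⋆ = - * ∘ φ ∘ *`, where `ψ = φ^⋆` is the super-adjoint for the Hermitean
inner product `inn` and `*` is the Hodge star `st`. -/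
theorem stmt9 {n : ℕ} (hn : Odd n) {V : Type*} [AddCommGroup V] [Module ℂ V]
    (b : Module.Basis (Fin n) ℂ V)
    (inn : ExteriorAlgebra ℂ V → ExteriorAlgebra ℂ V → ℂ)
    (inn_addl : ∀ x y z, inn (x + y) z = inn x z + inn y z)
    (inn_addr : ∀ x y z, inn x (y + z) = inn x y + inn x z)
    (inn_sml : ∀ (c : ℂ) (x y), inn (c • x) y = c * inn x y)
    (inn_smr : ∀ (c : ℂ) (x y), inn x (c • y) = (starRingEnd ℂ) c * inn x y)
    (inn_mon : ∀ s t, inn (cMonomial b s) (cMonomial b t) = if s = t then 1 else 0)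
    (cj : ExteriorAlgebra ℂ V →ₛₗ[starRingEnd ℂ] ExteriorAlgebra ℂ V)
    (cj_mon : ∀ s, cj (cMonomial b s) = cMonomial b s)
    (cj_mul : ∀ x y, cj (x * y) = cj x * cj y)
    (st : ExteriorAlgebra ℂ V →ₗ[ℂ] ExteriorAlgebra ℂ V)
    (st_deg : ∀ s : Finset (Fin n),
      st (cMonomial b s) ∈
        (LinearMap.range (ι ℂ : V →ₗ[ℂ] ExteriorAlgebra ℂ V)) ^ (n - s.card))
    (st_char : ∀ s t : Finset (Fin n), s.card = t.card →
      cMonomial b s * st (cMonomial b t)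
        = (if s = t then (1 : ℂ) else 0) • cMonomial b Finset.univ)
    (dφ : ℕ) (φ ψ : ExteriorAlgebra ℂ V →ₗ[ℂ] ExteriorAlgebra ℂ V)
    (hφ_deg : ∀ (k : ℕ) (α : ExteriorAlgebra ℂ V),
      α ∈ (LinearMap.range (ι ℂ : V →ₗ[ℂ] ExteriorAlgebra ℂ V)) ^ k →
      φ α ∈ (LinearMap.range (ι ℂ : V →ₗ[ℂ] ExteriorAlgebra ℂ V)) ^ (k + dφ)
        ∨ φ α ∈ (LinearMap.range (ι ℂ : V →ₗ[ℂ] ExteriorAlgebra ℂ V)) ^ (k - dφ))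
    (hψ : ∀ (k : ℕ) (α : ExteriorAlgebra ℂ V),
      α ∈ (LinearMap.range (ι ℂ : V →ₗ[ℂ] ExteriorAlgebra ℂ V)) ^ k →
      ∀ β, inn (φ α) β = (-1 : ℂ) ^ (dφ * k) * inn α (ψ β)) :
    (∀ (k : ℕ) (α : ExteriorAlgebra ℂ V),
      α ∈ (LinearMap.range (ι ℂ : V →ₗ[ℂ] ExteriorAlgebra ℂ V)) ^ k →
      ∀ β,
        inn (φ α * cj β) (cMonomial b Finset.univ)
          + (-1 : ℂ) ^ (dφ * k) * inn (α * cj (φ β)) (cMonomial b Finset.univ) = 0)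
    ↔ (∀ x, ψ x = - st (φ (st x))) := by
  classical
  -- basic consequences of the axioms for `inn`
  have inn0r : ∀ x, inn x 0 = 0 := by
    intro x
    have h := inn_smr 0 x 0
    rw [zero_smul] at h
    simpa using h
  have inn0l : ∀ x, inn 0 x = 0 := by
    intro x
    have h := inn_sml 0 0 x
    rw [zero_smul] at h
    simpa using h
  have innsumr : ∀ (x : ExteriorAlgebra ℂ V) (u : Finset (Finset (Fin n)))
      (f : Finset (Fin n) → ExteriorAlgebra ℂ V),
      inn x (∑ i ∈ u, f i) = ∑ i ∈ u, inn x (f i) := by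
    intro x u f
    induction u using Finset.cons_induction with
    | empty => simpa using inn0r x
    | cons a u ha ih => rw [Finset.sum_cons, Finset.sum_cons, inn_addr, ih]
  have innsuml : ∀ (y : ExteriorAlgebra ℂ V) (u : Finset (Finset (Fin n)))
      (f : Finset (Fin n) → ExteriorAlgebra ℂ V),
      inn (∑ i ∈ u, f i) y = ∑ i ∈ u, inn (f i) y := by
    intro y u f
    induction u using Finset.cons_induction with
    | empty => simpa using inn0l y
    | cons a u ha ih => rw [Finset.sum_cons, Finset.sum_cons, inn_addl, ih]
  have innnegr : ∀ x y, inn x (-y) = - inn x y := by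
    intro x y
    have h := inn_smr (-1) x y
    rw [neg_one_smul] at h
    rw [h]
    simp
  have hΩne : cMonomial b (Finset.univ : Finset (Fin n)) ≠ 0 := by
    intro h
    have h1 := inn_mon (Finset.univ : Finset (Fin n)) Finset.univ
    rw [if_pos rfl, h, inn0l] at h1
    exact one_ne_zero h1.symm
  have smul_cancel : ∀ a d : ℂ,
      a • cMonomial b (Finset.univ : Finset (Fin n)) = d • cMonomial b Finset.univ → a = d := by
    intro a d h
    have h2 : (a - d) • cMonomial b (Finset.univ : Finset (Fin n)) = 0 := by
      rw [sub_smul, h, sub_self]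
    rcases smul_eq_zero.mp h2 with h' | h'
    · exact sub_eq_zero.mp h'
    · exact absurd h' hΩne
  have ext0 : ∀ x : ExteriorAlgebra ℂ V, (∀ s, inn (cMonomial b s) x = 0) → x = 0 := by
    intro x hx
    obtain ⟨c, hc⟩ := Finsupp.mem_span_range_iff_exists_finsupp.mp (mem_span_range b x)
    have hcz : ∀ t, c t = 0 := by
      intro t
      by_cases ht : t ∈ c.support
      · have h1 := hx t
        rw [← hc, Finsupp.sum, innsumr] at h1
        have h2 : ∀ s ∈ c.support, inn (cMonomial b t) (c s • cMonomial b s)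
            = if t = s then (starRingEnd ℂ) (c s) else 0 := by
          intro s _
          rw [inn_smr, inn_mon]
          by_cases h : t = s <;> simp [h]
        rw [Finset.sum_congr rfl h2, Finset.sum_ite_eq, if_pos ht] at h1
        exact (starRingEnd ℂ).injective (by simpa using h1)
      · exact Finsupp.notMem_support_iff.mp ht
    have hc0 : c = 0 := Finsupp.ext hcz
    rw [← hc, hc0, Finsupp.sum_zero_index]
  have hcard : ∀ s : Finset (Fin n), s.card ≤ n := by
    intro s
    simpa using Finset.card_le_univ s
  -- the Hodge star on monomials
  have stf : ∀ t : Finset (Fin n), ∃ e : ℂ, (e = 1 ∨ e = -1) ∧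
      cMonomial b t * cMonomial b tᶜ = e • cMonomial b Finset.univ ∧
      st (cMonomial b t) = e • cMonomial b tᶜ := by
    intro t
    obtain ⟨e, he, hprod⟩ := cMonomial_mul_disjoint b t tᶜ disjoint_compl_right
    have hun : t ∪ tᶜ = Finset.univ := by simp
    rw [hun] at hprod
    refine ⟨e, he, hprod, ?_⟩
    have h1 := mem_span_monoSet b (n - t.card) _ (st_deg t)
    rw [Finsupp.mem_span_image_iff_linearCombination] at h1
    obtain ⟨c, hsupp, hc⟩ := h1
    rw [Finsupp.mem_supported] at hsupp
    rw [Finsupp.linearCombination_apply] at hc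
    have key : ∀ u : Finset (Fin n), u.card = t.card →
        ∀ eu : ℂ, cMonomial b u * cMonomial b uᶜ = eu • cMonomial b Finset.univ →
        c uᶜ * eu = (if u = t then 1 else 0) := by
      intro u hu eu hequ
      have h2 := st_char u t hu
      rw [← hc, Finsupp.sum, Finset.mul_sum] at h2
      have h3 : ∀ v ∈ c.support, cMonomial b u * (c v • cMonomial b v)
          = (if v = uᶜ then c v * eu else 0) • cMonomial b Finset.univ := by
        intro v hv
        have hvcard : v.card = n - t.card := hsupp hv
        by_cases hvu : v = uᶜ
        · subst hvu
          rw [mul_smul_comm, hequ, smul_smul, if_pos rfl]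
        · have hnd : ¬ Disjoint u v := by
            intro hd
            apply hvu
            have hsub : v ⊆ uᶜ := by
              intro x hxv
              rw [Finset.mem_compl]
              exact Finset.disjoint_right.mp hd hxv
            apply Finset.eq_of_subset_of_card_le hsub
            rw [hvcard, Finset.card_compl, hu]
            simp
          rw [mul_smul_comm, cMonomial_mul_zero b u v hnd, smul_zero, if_neg hvu, zero_smul]
      rw [Finset.sum_congr rfl h3, ← Finset.sum_smul, Finset.sum_ite_eq'] at h2
      have h4 := smul_cancel _ _ h2
      by_cases hmem : uᶜ ∈ c.support
      · rwa [if_pos hmem] at h4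
      · rw [if_neg hmem] at h4
        rw [Finsupp.notMem_support_iff.mp hmem, zero_mul]
        exact h4
    have hsub : c.support ⊆ {tᶜ} := by
      intro v hv
      rw [Finset.mem_singleton]
      have hvcard : v.card = n - t.card := hsupp hv
      have hvc : vᶜ.card = t.card := by
        rw [Finset.card_compl, hvcard]
        simp [Nat.sub_sub_self (hcard t)]
      by_contra hne
      obtain ⟨ev, hev, heqv⟩ := cMonomial_mul_disjoint b vᶜ vᶜᶜ disjoint_compl_right
      have hunv : vᶜ ∪ vᶜᶜ = Finset.univ := by rw [compl_compl]; simp [Finset.union_comm]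
      rw [hunv] at heqv
      have hk := key vᶜ hvc ev heqv
      rw [if_neg (fun h => hne (by rw [← compl_compl v, h])), compl_compl] at hk
      have hcv : c v = 0 := by
        rcases hev with rfl | rfl
        · linear_combination hk
        · linear_combination -hk
      exact Finsupp.mem_support_iff.mp hv hcv
    have hcsingle : c = Finsupp.single tᶜ (c tᶜ) := Finsupp.support_subset_singleton.mp hsub
    have hke := key t rfl e hprod
    rw [if_pos rfl] at hke
    have hcval : c tᶜ = e := by
      rcases he with rfl | rfl
      · simpa using hke
      · linear_combination -hke
    rw [← hc, hcsingle, Finsupp.sum_single_index (by rw [zero_smul]), hcval]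
  -- an even-parity fact
  have heven : ∀ t : Finset (Fin n), Even (t.card * tᶜ.card) := by
    intro t
    rw [Finset.card_compl, Fintype.card_fin]
    rcases Nat.even_or_odd t.card with h | h
    · exact h.mul_right _
    · exact (Nat.Odd.sub_odd hn h).mul_left _
  -- the star squares to the identity
  have ststM : ∀ t : Finset (Fin n), st (st (cMonomial b t)) = cMonomial b t := by
    intro t
    obtain ⟨e, he, hprod, hst⟩ := stf t
    obtain ⟨e', he', hprod', hst'⟩ := stf tᶜ
    rw [compl_compl] at hprod' hst'
    have hcomm := cMonomial_comm b t tᶜ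
    rw [(heven t).neg_one_pow, one_smul] at hcomm
    have hee : e = e' := smul_cancel _ _ (by rw [← hprod, hcomm, hprod'])
    rw [hst, map_smul, hst', ← hee, smul_smul]
    rcases he with rfl | rfl <;> norm_num
  have stst : ∀ x, st (st x) = x := by
    intro x
    have hx := mem_span_range b x
    induction hx using Submodule.span_induction with
    | mem y hy =>
      obtain ⟨t, rfl⟩ := hy
      exact ststM t
    | zero => simp
    | add y z _ _ h1 h2 => rw [map_add, map_add, h1, h2]
    | smul a y _ h1 => rw [map_smul, map_smul, h1]
  -- the key identity on monomials
  have keyM : ∀ s t : Finset (Fin n),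
      inn (cMonomial b s * cMonomial b t) (cMonomial b Finset.univ)
        = inn (cMonomial b s) (st (cMonomial b t)) := by
    intro s t
    obtain ⟨e, he, hprod, hst⟩ := stf t
    have hconj : (starRingEnd ℂ) e = e := by rcases he with rfl | rfl <;> simp
    rw [hst, inn_smr, hconj, inn_mon]
    by_cases hd : Disjoint s t
    · obtain ⟨c, hc, hmul⟩ := cMonomial_mul_disjoint b s t hd
      rw [hmul, inn_sml, inn_mon]
      by_cases hu : s = tᶜ
      · subst hu
        have hun : tᶜ ∪ t = Finset.univ := by simp [Finset.union_comm]
        rw [if_pos hun, if_pos rfl]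
        have hcomm := cMonomial_comm b t tᶜ
        rw [(heven t).neg_one_pow, one_smul] at hcomm
        have hce : c = e := by
          apply smul_cancel
          rw [hun] at hmul
          rw [← hmul, ← hcomm, hprod]
        rw [hce]
      · have hun : s ∪ t ≠ Finset.univ := by
          intro hun
          apply hu
          apply Finset.Subset.antisymm
          · intro x hxs
            rw [Finset.mem_compl]
            exact Finset.disjoint_left.mp hd hxs
          · intro x hxc
            rw [Finset.mem_compl] at hxc
            have : x ∈ s ∪ t := by rw [hun]; exact Finset.mem_univ x
            rcases Finset.mem_union.mp this with h | h
            · exact h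
            · exact absurd h hxc
        rw [if_neg hun, if_neg hu]
        ring
    · rw [cMonomial_mul_zero b s t hd, inn0l]
      have hne2 : s ≠ tᶜ := by
        intro h
        subst h
        exact hd disjoint_compl_left
      rw [if_neg hne2]
      ring
  -- the key identity, second argument a monomial
  have keyA : ∀ (t : Finset (Fin n)) (x : ExteriorAlgebra ℂ V),
      inn (x * cMonomial b t) (cMonomial b Finset.univ)
        = inn x (st (cMonomial b t)) := by
    intro t x
    obtain ⟨a, ha⟩ := Finsupp.mem_span_range_iff_exists_finsupp.mp (mem_span_range b x)
    rw [← ha, Finsupp.sum, Finset.sum_mul, innsuml, innsuml]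
    refine Finset.sum_congr rfl fun s _ => ?_
    rw [smul_mul_assoc, inn_sml, inn_sml, keyM]
  -- the key identity in general
  have keyI : ∀ x y : ExteriorAlgebra ℂ V,
      inn (x * cj y) (cMonomial b Finset.univ) = inn x (st y) := by
    intro x y
    obtain ⟨d, hd⟩ := Finsupp.mem_span_range_iff_exists_finsupp.mp (mem_span_range b y)
    rw [← hd, Finsupp.sum]
    have lhs : inn (x * cj (∑ t ∈ d.support, d t • cMonomial b t)) (cMonomial b Finset.univ)
        = ∑ t ∈ d.support, (starRingEnd ℂ) (d t)
            * inn (x * cMonomial b t) (cMonomial b Finset.univ) := by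
      rw [map_sum, Finset.mul_sum, innsuml]
      refine Finset.sum_congr rfl fun t _ => ?_
      rw [LinearMap.map_smulₛₗ, cj_mon, mul_smul_comm, inn_sml]
    have rhs : inn x (st (∑ t ∈ d.support, d t • cMonomial b t))
        = ∑ t ∈ d.support, (starRingEnd ℂ) (d t) * inn x (st (cMonomial b t)) := by
      rw [map_sum, innsumr]
      refine Finset.sum_congr rfl fun t _ => ?_
      rw [map_smul, inn_smr]
    rw [lhs, rhs]
    exact Finset.sum_congr rfl fun t _ => by rw [keyA]
  constructor
  · intro hL x
    have main : ∀ β, ψ (st β) + st (φ β) = 0 := by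
      intro β
      apply ext0
      intro s
      have hs := hL s.card (cMonomial b s) (cMonomial_mem b s) β
      rw [keyI, keyI, hψ s.card (cMonomial b s) (cMonomial_mem b s) (st β), ← mul_add] at hs
      rcases mul_eq_zero.mp hs with h | h
      · exact absurd h (pow_ne_zero _ (by norm_num))
      · rw [inn_addr]
        exact h
    have h := main (st x)
    rw [stst] at h
    exact eq_neg_of_add_eq_zero_left h
  · intro hR k α hα β
    have h1 : ψ (st β) = - st (φ β) := by rw [hR, stst]
    rw [keyI, keyI, hψ k α hα (st β), h1, innnegr]
    ring
end

section
/- With the setup of a rank-three WSD point (T = W ⊗ ℝ³, dim W = 3), the wedge operators L_j with the structural 2-forms ω_D, -ω₂, ω₁ and the wedge operators V_j with the volume forms of the three distributions W_j = W⊗e_j all commute with the derivations J₁, J₂, J₃ generating so(3,ℝ) on Λ*(T⊗ℂ). -/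
open ExteriorAlgebra

set_option maxHeartbeats 1000000 in
/-- at a rank-three WSD point (`T = W ⊗ ℝ³`, `dim W = 3`, complexified),
the wedge operators `L₀ = ω_D ∧ ·`, `L₁ = -ω₂ ∧ ·`, `L₂ = ω₁ ∧ ·` with the structural
2-forms and the wedge operators `V_j = Vol(W_j) ∧ ·` with the volume forms of the three
distributions all commute with the derivations `J₁, J₂, J₃` generating `so(3,ℝ)` on
`Λ*(T⊗ℂ)`. -/
theorem stmt16 {T : Type*} [AddCommGroup T] [Module ℂ T]
    (v : Module.Basis (Fin 3 × Fin 3) ℂ T)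
    (J : Fin 3 → Module.End ℂ (ExteriorAlgebra ℂ T))
    (hder : ∀ (k : Fin 3) (x y : ExteriorAlgebra ℂ T),
      J k (x * y) = J k x * y + x * J k y)
    (hJ0 : ∀ j : Fin 3, J 0 (ι ℂ (v (0, j))) = 0 ∧
      J 0 (ι ℂ (v (1, j))) = ι ℂ (v (2, j)) ∧
      J 0 (ι ℂ (v (2, j))) = -ι ℂ (v (1, j)))
    (hJ1 : ∀ j : Fin 3, J 1 (ι ℂ (v (2, j))) = ι ℂ (v (0, j)) ∧
      J 1 (ι ℂ (v (0, j))) = -ι ℂ (v (2, j)) ∧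
      J 1 (ι ℂ (v (1, j))) = 0)
    (hJ2 : ∀ j : Fin 3, J 2 (ι ℂ (v (0, j))) = ι ℂ (v (1, j)) ∧
      J 2 (ι ℂ (v (1, j))) = -ι ℂ (v (0, j)) ∧
      J 2 (ι ℂ (v (2, j))) = 0)
    (ω₁ ω₂ ωD : ExteriorAlgebra ℂ T)
    (hω₁ : ω₁ = ∑ i : Fin 3, ι ℂ (v (i, 0)) * ι ℂ (v (i, 1)))
    (hω₂ : ω₂ = ∑ i : Fin 3, ι ℂ (v (i, 0)) * ι ℂ (v (i, 2)))
    (hωD : ωD = ∑ i : Fin 3, ι ℂ (v (i, 1)) * ι ℂ (v (i, 2)))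
    (Vol : Fin 3 → ExteriorAlgebra ℂ T)
    (hVol : ∀ j, Vol j = ι ℂ (v (0, j)) * ι ℂ (v (1, j)) * ι ℂ (v (2, j))) :
    ∀ (k : Fin 3) (x : ExteriorAlgebra ℂ T),
      J k (ωD * x) = ωD * J k x ∧
      J k (-ω₂ * x) = -ω₂ * J k x ∧
      J k (ω₁ * x) = ω₁ * J k x ∧
      ∀ j : Fin 3, J k (Vol j * x) = Vol j * J k x := by
  have h00 : ∀ j, J 0 (ι ℂ (v (0, j))) = 0 := fun j => (hJ0 j).1
  have h01 : ∀ j, J 0 (ι ℂ (v (1, j))) = ι ℂ (v (2, j)) := fun j => (hJ0 j).2.1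
  have h02 : ∀ j, J 0 (ι ℂ (v (2, j))) = -ι ℂ (v (1, j)) := fun j => (hJ0 j).2.2
  have h12 : ∀ j, J 1 (ι ℂ (v (2, j))) = ι ℂ (v (0, j)) := fun j => (hJ1 j).1
  have h10 : ∀ j, J 1 (ι ℂ (v (0, j))) = -ι ℂ (v (2, j)) := fun j => (hJ1 j).2.1
  have h11 : ∀ j, J 1 (ι ℂ (v (1, j))) = 0 := fun j => (hJ1 j).2.2
  have h20 : ∀ j, J 2 (ι ℂ (v (0, j))) = ι ℂ (v (1, j)) := fun j => (hJ2 j).1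
  have h21 : ∀ j, J 2 (ι ℂ (v (1, j))) = -ι ℂ (v (0, j)) := fun j => (hJ2 j).2.1
  have h22 : ∀ j, J 2 (ι ℂ (v (2, j))) = 0 := fun j => (hJ2 j).2.2
  have hsq : ∀ (m : T) (x : ExteriorAlgebra ℂ T), ι ℂ m * (ι ℂ m * x) = 0 := by
    intro m x
    rw [← mul_assoc, ι_sq_zero, zero_mul]
  have haba : ∀ (m n : T), ι ℂ m * (ι ℂ n * ι ℂ m) = 0 := by
    intro m n
    have h : ι ℂ m * ι ℂ n = -(ι ℂ n * ι ℂ m) :=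
      eq_neg_of_add_eq_zero_left (ι_add_mul_swap m n)
    rw [← mul_assoc, h, neg_mul, mul_assoc, ι_sq_zero, mul_zero, neg_zero]
  have hmul : ∀ (k : Fin 3) (ω x : ExteriorAlgebra ℂ T), J k ω = 0 →
      J k (ω * x) = ω * J k x := by
    intro k ω x h
    rw [hder, h, zero_mul, zero_add]
  have key0 : J 0 ωD = 0 ∧ J 0 ω₂ = 0 ∧ J 0 ω₁ = 0 ∧ ∀ j, J 0 (Vol j) = 0 := by
    refine ⟨?_, ?_, ?_, fun j => ?_⟩ <;>
      simp only [hωD, hω₂, hω₁, hVol, map_sum, map_add, Fin.sum_univ_three, hder,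
        h00, h01, h02, mul_neg, neg_mul, mul_zero, zero_mul, zero_add, add_zero,
        mul_assoc, ι_sq_zero, hsq, haba, neg_zero, smul_zero, zero_smul, neg_zero,
        add_zero, zero_add] <;>
      abel
  have key1 : J 1 ωD = 0 ∧ J 1 ω₂ = 0 ∧ J 1 ω₁ = 0 ∧ ∀ j, J 1 (Vol j) = 0 := by
    refine ⟨?_, ?_, ?_, fun j => ?_⟩ <;>
      simp only [hωD, hω₂, hω₁, hVol, map_sum, map_add, Fin.sum_univ_three, hder,
        h10, h11, h12, mul_neg, neg_mul, mul_zero, zero_mul, zero_add, add_zero,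
        mul_assoc, ι_sq_zero, hsq, haba, neg_zero, smul_zero, zero_smul, neg_zero,
        add_zero, zero_add] <;>
      abel
  have key2 : J 2 ωD = 0 ∧ J 2 ω₂ = 0 ∧ J 2 ω₁ = 0 ∧ ∀ j, J 2 (Vol j) = 0 := by
    refine ⟨?_, ?_, ?_, fun j => ?_⟩ <;>
      simp only [hωD, hω₂, hω₁, hVol, map_sum, map_add, Fin.sum_univ_three, hder,
        h20, h21, h22, mul_neg, neg_mul, mul_zero, zero_mul, zero_add, add_zero,
        mul_assoc, ι_sq_zero, hsq, haba, neg_zero, smul_zero, zero_smul, neg_zero,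
        add_zero, zero_add] <;>
      abel
  have main : ∀ k : Fin 3, J k ωD = 0 ∧ J k ω₂ = 0 ∧ J k ω₁ = 0 ∧ ∀ j, J k (Vol j) = 0 := by
    intro k
    fin_cases k
    · exact key0
    · exact key1
    · exact key2
  intro k x
  obtain ⟨hD, h2, h1, hV⟩ := main k
  refine ⟨hmul k _ _ hD, ?_, hmul k _ _ h1, fun j => hmul k _ _ (hV j)⟩
  have hn : J k (-ω₂) = 0 := by rw [map_neg, h2, neg_zero]
  exact hmul k _ _ hn
end
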